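/- arXiv:1609.01782 — 4 statements merged into one kernel-verified Lean document; each statement's English description precedes it below -/
import Mathlib

section
/- For all n ≥ 1, the polytope P_n(123,132,231) is unimodularly equivalent to the standard simplex Δ_{n−1} = conv{e_1, …, e_n} ⊆ ℝ^n, where e_1, …, e_n are the standard basis vectors of ℝ^n. -/
open Pointwise

/-- `σ` contains the pattern `π`. -/
def containsPattern {n k : ℕ} (σ : Equiv.Perm (Fin n)) (π : Equiv.Perm (Fin k)) : Prop :=
  ∃ f : Fin k → Fin n, StrictMono f ∧ ∀ a b : Fin k, σ (f a) < σ (f b) ↔ π a < π b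

/-- The pattern 123. -/
def p123 : Equiv.Perm (Fin 3) := 1
/-- The pattern 132. -/
def p132 : Equiv.Perm (Fin 3) := Equiv.swap 1 2
/-- The pattern 231. -/
def p231 : Equiv.Perm (Fin 3) := finRotate 3

/-- The point `(σ(1), …, σ(n)) ∈ ℝ^n` (one-based values). -/
def permPoint {n : ℕ} (σ : Equiv.Perm (Fin n)) : Fin n → ℝ := fun i => ((σ i : ℕ) : ℝ) + 1

/-- The polytope `P_n(123,132,231)`. -/
def P123132231 (n : ℕ) : Set (Fin n → ℝ) :=
  convexHull ℝ (permPoint ''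
    {σ : Equiv.Perm (Fin n) |
      ¬ containsPattern σ p123 ∧ ¬ containsPattern σ p132 ∧ ¬ containsPattern σ p231})

/-- Unimodular equivalence of subsets of `ℝ^ι`. -/
def UnimodEquiv {ι : Type} [Fintype ι] [DecidableEq ι] (P Q : Set (ι → ℝ)) : Prop :=
  ∃ (A : Matrix ι ι ℤ) (b : ι → ℤ), (A.det = 1 ∨ A.det = -1) ∧
    Set.BijOn (fun x => (A.map (fun z : ℤ => (z : ℝ))).mulVec x + fun i => ((b i : ℝ))) P Q

open Finset

def Hdec {n : ℕ} (σ : Equiv.Perm (Fin n)) : Prop :=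
  ∀ i j : Fin n, i < j → (j : ℕ) < n - 1 → σ j < σ i

def avPerm {n : ℕ} (k : Fin n) : Equiv.Perm (Fin n) where
  toFun i :=
    if (k : ℕ) < n - 1 - (i : ℕ) then ⟨n - 1 - (i : ℕ), by omega⟩
    else if (i : ℕ) = n - 1 then k
    else ⟨n - 2 - (i : ℕ), by have := i.isLt; omega⟩
  invFun v :=
    if (v : ℕ) = (k : ℕ) then ⟨n - 1, by have := v.isLt; omega⟩
    else if (k : ℕ) < (v : ℕ) then ⟨n - 1 - (v : ℕ), by have := v.isLt; omega⟩
    else ⟨n - 2 - (v : ℕ), by have := v.isLt; omega⟩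
  left_inv := by
    intro i
    have hi := i.isLt
    have hk := k.isLt
    simp only
    split_ifs <;> apply Fin.ext <;> simp_all [Fin.val_mk] <;> omega
  right_inv := by
    intro v
    have hv := v.isLt
    have hk := k.isLt
    simp only
    split_ifs <;> apply Fin.ext <;> simp_all [Fin.val_mk] <;> omega

lemma avPerm_val {n : ℕ} (k : Fin n) (i : Fin n) :
    ((avPerm k i : Fin n) : ℕ) =
      if (k : ℕ) < n - 1 - (i : ℕ) then n - 1 - (i : ℕ)
      else if (i : ℕ) = n - 1 then (k : ℕ)
      else n - 2 - (i : ℕ) := by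
  simp only [avPerm, Equiv.coe_fn_mk]
  split_ifs <;> rfl

lemma hdec_avPerm {n : ℕ} (k : Fin n) : Hdec (avPerm k) := by
  intro i j hij hj
  have hij' : (i : ℕ) < (j : ℕ) := hij
  have hk := k.isLt
  rw [Fin.lt_def, avPerm_val, avPerm_val]
  split_ifs <;> omega

def theA (n : ℕ) : Matrix (Fin n) (Fin n) ℤ := fun i j =>
  if (i : ℕ) = 0 then (if (j : ℕ) = 0 then -1 else 0)
  else if (i : ℕ) = n - 1 then (if (j : ℕ) = n - 2 then 2 else 1)
  else (if (j : ℕ) = (i : ℕ) - 1 then 1 else 0) + (if (j : ℕ) = (i : ℕ) then -1 else 0)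

def theb (n : ℕ) : Fin n → ℤ := fun i =>
  if (i : ℕ) = 0 then (n : ℤ)
  else if (i : ℕ) = n - 1 then -(∑ j ∈ Finset.range n, (j : ℤ)) - (n : ℤ) - 1
  else -1

lemma sum_if_val_eq {n : ℕ} (m : ℕ) (hm : m < n) (f : Fin n → ℝ) (r : ℝ) :
    ∑ j : Fin n, (if (j : ℕ) = m then r else 0) * f j = r * f ⟨m, hm⟩ := by
  rw [Finset.sum_eq_single (⟨m, hm⟩ : Fin n)]
  · simp
  · intro b _ hb
    have : (b : ℕ) ≠ m := fun e => hb (Fin.ext e)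
    simp [this]
  · simp

lemma sum_permPoint {n : ℕ} (σ : Equiv.Perm (Fin n)) :
    ∑ j : Fin n, permPoint σ j = ((∑ j ∈ Finset.range n, (j : ℤ) : ℤ) : ℝ) + n := by
  unfold permPoint
  rw [Finset.sum_add_distrib]
  simp only [Finset.sum_const, Finset.card_univ, Fintype.card_fin, nsmul_eq_mul, mul_one]
  congr 1
  rw [Fintype.sum_bijective σ σ.bijective _ (fun j : Fin n => ((j : ℕ) : ℝ)) (fun x => rfl)]
  rw [Fin.sum_univ_eq_sum_range (fun m => (m : ℝ))]
  push_cast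
  rfl

lemma coord_formula {n : ℕ} (hn : 2 ≤ n) (σ : Equiv.Perm (Fin n)) (i : Fin n) :
    (((theA n).map (fun z : ℤ => (z : ℝ))).mulVec (permPoint σ) + fun i => ((theb n i : ℝ))) i =
      if (i : ℕ) = 0 then (n : ℝ) - 1 - ((σ ⟨0, by omega⟩ : ℕ) : ℝ)
      else if (i : ℕ) = n - 1 then ((σ ⟨n - 2, by omega⟩ : ℕ) : ℝ)
      else ((σ ⟨(i : ℕ) - 1, by omega⟩ : ℕ) : ℝ) - ((σ i : ℕ) : ℝ) - 1 := by
  have hi := i.isLt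
  simp only [Pi.add_apply, Matrix.mulVec, dotProduct, Matrix.map_apply]
  by_cases h0 : (i : ℕ) = 0
  · rw [if_pos h0]
    have hrow : ∀ j : Fin n, ((theA n i j : ℤ) : ℝ) = if (j : ℕ) = 0 then (-1 : ℝ) else 0 := by
      intro j
      unfold theA
      rw [if_pos h0]
      split_ifs <;> simp
    calc (∑ j : Fin n, ((theA n i j : ℤ) : ℝ) * permPoint σ j) + ((theb n i : ℤ) : ℝ)
        = (∑ j : Fin n, (if (j : ℕ) = 0 then (-1 : ℝ) else 0) * permPoint σ j) + ((theb n i : ℤ) : ℝ) := by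
          rw [Finset.sum_congr rfl (fun j _ => by rw [hrow j] : ∀ j ∈ Finset.univ, ((theA n i j : ℤ) : ℝ) * permPoint σ j = (if (j : ℕ) = 0 then (-1 : ℝ) else 0) * permPoint σ j)]
      _ = -1 * permPoint σ ⟨0, by omega⟩ + ((theb n i : ℤ) : ℝ) := by
          rw [sum_if_val_eq 0 (by omega)]
      _ = (n : ℝ) - 1 - ((σ ⟨0, by omega⟩ : ℕ) : ℝ) := by
          unfold theb permPoint
          rw [if_pos h0]
          push_cast
          ring
  · rw [if_neg h0]
    by_cases h1 : (i : ℕ) = n - 1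
    · rw [if_pos h1]
      have hrow : ∀ j : Fin n, ((theA n i j : ℤ) : ℝ)
          = (if (j : ℕ) = n - 2 then (1 : ℝ) else 0) + 1 := by
        intro j
        unfold theA
        rw [if_neg h0, if_pos h1]
        split_ifs <;> norm_num
      have hsum : (∑ j : Fin n, ((theA n i j : ℤ) : ℝ) * permPoint σ j)
          = ∑ j : Fin n, ((if (j : ℕ) = n - 2 then (1 : ℝ) else 0) * permPoint σ j
              + permPoint σ j) := by
        apply Finset.sum_congr rfl
        intro j _
        rw [hrow j]; ring
      calc (∑ j : Fin n, ((theA n i j : ℤ) : ℝ) * permPoint σ j) + ((theb n i : ℤ) : ℝ)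
          = (∑ j : Fin n, ((if (j : ℕ) = n - 2 then (1 : ℝ) else 0) * permPoint σ j
              + permPoint σ j)) + ((theb n i : ℤ) : ℝ) := by rw [hsum]
        _ = 1 * permPoint σ ⟨n - 2, by omega⟩ + (((∑ j ∈ Finset.range n, (j : ℤ) : ℤ) : ℝ) + n)
              + ((theb n i : ℤ) : ℝ) := by
            rw [Finset.sum_add_distrib, sum_if_val_eq (n - 2) (by omega), sum_permPoint]
        _ = ((σ ⟨n - 2, by omega⟩ : ℕ) : ℝ) := by
            unfold theb permPoint
            rw [if_neg h0, if_pos h1]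
            push_cast
            ring
    · rw [if_neg h1]
      have hrow : ∀ j : Fin n, ((theA n i j : ℤ) : ℝ)
          = (if (j : ℕ) = (i : ℕ) - 1 then (1 : ℝ) else 0)
            + (if (j : ℕ) = (i : ℕ) then (-1 : ℝ) else 0) := by
        intro j
        unfold theA
        rw [if_neg h0, if_neg h1]
        split_ifs <;> simp
      have hsum : (∑ j : Fin n, ((theA n i j : ℤ) : ℝ) * permPoint σ j)
          = ∑ j : Fin n, ((if (j : ℕ) = (i : ℕ) - 1 then (1 : ℝ) else 0) * permPoint σ j
              + (if (j : ℕ) = (i : ℕ) then (-1 : ℝ) else 0) * permPoint σ j) := by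
        apply Finset.sum_congr rfl
        intro j _
        rw [hrow j]; ring
      calc (∑ j : Fin n, ((theA n i j : ℤ) : ℝ) * permPoint σ j) + ((theb n i : ℤ) : ℝ)
          = (∑ j : Fin n, ((if (j : ℕ) = (i : ℕ) - 1 then (1 : ℝ) else 0) * permPoint σ j
              + (if (j : ℕ) = (i : ℕ) then (-1 : ℝ) else 0) * permPoint σ j)) + ((theb n i : ℤ) : ℝ) := by rw [hsum]
        _ = 1 * permPoint σ ⟨(i : ℕ) - 1, by omega⟩ + (-1) * permPoint σ ⟨(i : ℕ), by omega⟩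
              + ((theb n i : ℤ) : ℝ) := by
            rw [Finset.sum_add_distrib, sum_if_val_eq ((i : ℕ) - 1) (by omega),
              sum_if_val_eq (i : ℕ) (by omega)]
        _ = ((σ ⟨(i : ℕ) - 1, by omega⟩ : ℕ) : ℝ) - ((σ i : ℕ) : ℝ) - 1 := by
            unfold theb permPoint
            rw [if_neg h0, if_neg h1]
            have : (⟨(i : ℕ), by omega⟩ : Fin n) = i := Fin.ext rfl
            rw [this]
            push_cast
            ring

lemma theA_lowerTriangular (n : ℕ) (hn : 2 ≤ n) :
    Matrix.BlockTriangular (theA n) OrderDual.toDual := by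
  intro i j hij
  have hij' : (i : ℕ) < (j : ℕ) := hij
  have hi := i.isLt
  have hj := j.isLt
  unfold theA
  split_ifs <;> omega

lemma theA_det (n : ℕ) (hn : 2 ≤ n) : (theA n).det = 1 ∨ (theA n).det = -1 := by
  rw [Matrix.det_of_lowerTriangular _ (theA_lowerTriangular n hn)]
  refine Finset.prod_induction _ (fun x => x = 1 ∨ x = -1) ?_ (Or.inl rfl) ?_
  · rintro a b (rfl | rfl) (rfl | rfl) <;> simp
  · intro i _
    have hi := i.isLt
    unfold theA
    split_ifs <;> omega

lemma avoids_of_hdec {n : ℕ} (σ : Equiv.Perm (Fin n)) (h : Hdec σ)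
    (π : Equiv.Perm (Fin 3)) (hπ : π 0 < π 1) : ¬ containsPattern σ π := by
  rintro ⟨f, hf, hp⟩
  have h01 : f 0 < f 1 := hf (by decide)
  have h12 : f 1 < f 2 := hf (by decide)
  have hlt : (f 1 : ℕ) < n - 1 := by
    have h2 : (f 2 : ℕ) < n := (f 2).isLt
    have h12' : (f 1 : ℕ) < (f 2 : ℕ) := h12
    omega
  exact lt_asymm (h (f 0) (f 1) h01 hlt) ((hp 0 1).2 hπ)

lemma hdec_of_avoids {n : ℕ} (σ : Equiv.Perm (Fin n))
    (h1 : ¬ containsPattern σ p123) (h2 : ¬ containsPattern σ p132)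
    (h3 : ¬ containsPattern σ p231) : Hdec σ := by
  intro i j hij hj
  by_contra hcon
  push_neg at hcon
  have hne : σ i ≠ σ j := fun e => absurd (σ.injective e) (ne_of_lt hij)
  have hij' : σ i < σ j := lt_of_le_of_ne hcon hne
  have hm : (j : ℕ) < n := j.isLt
  set m : Fin n := ⟨n - 1, by omega⟩ with hmdef
  have hjm : j < m := by rw [Fin.lt_def]; exact hj
  have him : i < m := lt_trans hij hjm
  have hmi : σ m ≠ σ i := fun e => absurd (σ.injective e) (ne_of_gt him)
  have hmj : σ m ≠ σ j := fun e => absurd (σ.injective e) (ne_of_gt hjm)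
  set f : Fin 3 → Fin n := ![i, j, m] with hfdef
  have hsm : StrictMono f := by
    intro a b hab
    fin_cases a <;> fin_cases b <;>
      first
      | exact absurd hab (by decide)
      | simpa [hfdef] using hij
      | simpa [hfdef] using hjm
      | simpa [hfdef] using him
  rw [Fin.lt_def] at hij'
  rcases lt_trichotomy (σ m) (σ i) with hc | hc | hc
  · rw [Fin.lt_def] at hc
    apply h3
    refine ⟨f, hsm, fun a b => ?_⟩
    fin_cases a <;> fin_cases b <;>
      simp only [hfdef, Matrix.cons_val_zero, Matrix.cons_val_one, Matrix.head_cons,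
        Matrix.cons_val_two, Matrix.tail_cons, Fin.isValue, Fin.zero_eta, Fin.mk_one,
        Fin.reduceFinMk] <;>
      first
      | exact iff_of_true (by simp only [Fin.lt_def]; omega) (by decide)
      | exact iff_of_false (by simp only [Fin.lt_def]; omega) (by decide)
  · exact hmi hc
  · rcases lt_trichotomy (σ m) (σ j) with hc2 | hc2 | hc2
    · rw [Fin.lt_def] at hc hc2
      apply h2
      refine ⟨f, hsm, fun a b => ?_⟩
      fin_cases a <;> fin_cases b <;>
        simp only [hfdef, Matrix.cons_val_zero, Matrix.cons_val_one, Matrix.head_cons,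
          Matrix.cons_val_two, Matrix.tail_cons, Fin.isValue, Fin.zero_eta, Fin.mk_one,
          Fin.reduceFinMk] <;>
        first
        | exact iff_of_true (by simp only [Fin.lt_def]; omega) (by decide)
        | exact iff_of_false (by simp only [Fin.lt_def]; omega) (by decide)
    · exact hmj hc2
    · rw [Fin.lt_def] at hc hc2
      apply h1
      refine ⟨f, hsm, fun a b => ?_⟩
      fin_cases a <;> fin_cases b <;>
        simp only [hfdef, Matrix.cons_val_zero, Matrix.cons_val_one, Matrix.head_cons,
          Matrix.cons_val_two, Matrix.tail_cons, Fin.isValue, Fin.zero_eta, Fin.mk_one,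
          Fin.reduceFinMk] <;>
        first
        | exact iff_of_true (by simp only [Fin.lt_def]; omega) (by decide)
        | exact iff_of_false (by simp only [Fin.lt_def]; omega) (by decide)

lemma coord_nonneg {n : ℕ} (hn : 2 ≤ n) (σ : Equiv.Perm (Fin n)) (hσ : Hdec σ) (i : Fin n) :
    0 ≤ (((theA n).map (fun z : ℤ => (z : ℝ))).mulVec (permPoint σ) + fun i => ((theb n i : ℝ))) i := by
  rw [coord_formula hn σ i]
  have hi := i.isLt
  split_ifs with h0 h1
  · have := (σ ⟨0, by omega⟩).isLt
    have : ((σ ⟨0, by omega⟩ : Fin n) : ℕ) ≤ n - 1 := by omega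
    have hcast : (((σ ⟨0, by omega⟩ : Fin n) : ℕ) : ℝ) ≤ (n : ℝ) - 1 := by
      rw [show (n : ℝ) - 1 = ((n - 1 : ℕ) : ℝ) from by push_cast [Nat.cast_sub (by omega : 1 ≤ n)]; ring]
      exact_mod_cast this
    linarith
  · positivity
  · have hlt : σ i < σ ⟨(i : ℕ) - 1, by omega⟩ := by
      apply hσ _ _ _ (by omega)
      rw [Fin.lt_def]
      simp only [Fin.val_mk]
      omega
    have : ((σ i : Fin n) : ℕ) + 1 ≤ ((σ ⟨(i : ℕ) - 1, by omega⟩ : Fin n) : ℕ) := hlt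
    have hcast : ((σ i : ℕ) : ℝ) + 1 ≤ ((σ ⟨(i : ℕ) - 1, by omega⟩ : ℕ) : ℝ) := by
      exact_mod_cast this
    linarith

lemma sum_split {n : ℕ} (hn : 2 ≤ n) (F : ℕ → ℝ) :
    ∑ m ∈ Finset.range n, F m = F 0 + (∑ m ∈ Finset.range (n - 2), F (m + 1)) + F (n - 1) := by
  rw [show n = (n - 2 + 1) + 1 from by omega]
  rw [Finset.sum_range_succ, Finset.sum_range_succ']
  simp only [show n - 2 + 1 + 1 - 2 = n - 2 from by omega,
    show n - 2 + 1 + 1 - 1 = n - 2 + 1 from by omega]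
  ring

lemma coord_sum {n : ℕ} (hn : 2 ≤ n) (σ : Equiv.Perm (Fin n)) :
    ∑ i : Fin n, (((theA n).map (fun z : ℤ => (z : ℝ))).mulVec (permPoint σ) + fun i => ((theb n i : ℝ))) i = 1 := by
  set g : ℕ → ℝ := fun m => if h : m < n then ((σ ⟨m, h⟩ : ℕ) : ℝ) else 0 with hg
  have hgval : ∀ (m : ℕ) (h : m < n), g m = ((σ ⟨m, h⟩ : ℕ) : ℝ) := by
    intro m h
    rw [hg]
    exact dif_pos h
  have hF : ∀ i : Fin n,
      (((theA n).map (fun z : ℤ => (z : ℝ))).mulVec (permPoint σ) + fun i => ((theb n i : ℝ))) i =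
      (if (i : ℕ) = 0 then (n : ℝ) - 1 - g 0 else if (i : ℕ) = n - 1 then g (n - 2)
        else g ((i : ℕ) - 1) - g (i : ℕ) - 1) := by
    intro i
    have hi := i.isLt
    rw [coord_formula hn σ i]
    split_ifs with h0 h1
    · rw [hgval 0 (by omega)]
    · rw [hgval (n - 2) (by omega)]
    · rw [hgval ((i : ℕ) - 1) (by omega), hgval (i : ℕ) hi]
  rw [Finset.sum_congr rfl (fun i _ => hF i)]
  rw [Fin.sum_univ_eq_sum_range (fun m => (if m = 0 then (n : ℝ) - 1 - g 0
      else if m = n - 1 then g (n - 2) else g (m - 1) - g m - 1))]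
  rw [sum_split hn]
  have hmid : ∀ m ∈ Finset.range (n - 2),
      (if m + 1 = 0 then (n : ℝ) - 1 - g 0 else if m + 1 = n - 1 then g (n - 2)
        else g (m + 1 - 1) - g (m + 1) - 1) = (g m - g (m + 1)) - 1 := by
    intro m hm
    rw [Finset.mem_range] at hm
    rw [if_neg (by omega), if_neg (by omega)]
    simp
  rw [Finset.sum_congr rfl hmid]
  rw [Finset.sum_sub_distrib, Finset.sum_range_sub' g]
  simp only [eq_self_iff_true, if_true, Finset.sum_const, Finset.card_range, nsmul_eq_mul,
    mul_one, if_neg (show ¬(n - 1 = 0) from by omega)]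
  have : ((n - 2 : ℕ) : ℝ) = (n : ℝ) - 2 := by
    push_cast [Nat.cast_sub (by omega : 2 ≤ n)]; ring
  rw [this]
  ring

lemma coord_avPerm {n : ℕ} (hn : 2 ≤ n) (k : Fin n) (i : Fin n) :
    (((theA n).map (fun z : ℤ => (z : ℝ))).mulVec (permPoint (avPerm k)) + fun i => ((theb n i : ℝ))) i
      = if (i : ℕ) = n - 1 - (k : ℕ) then 1 else 0 := by
  have hi := i.isLt
  have hk := k.isLt
  rw [coord_formula hn (avPerm k) i]
  split_ifs with h0 h1 h2 h3 h4 h5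
  · -- i = 0 and 0 = n-1-k, so k = n-1 : σ(0) = n-2
    have hv : ((avPerm k ⟨0, by omega⟩ : Fin n) : ℕ) = n - 2 := by
      rw [avPerm_val]
      simp only [Fin.val_mk]
      split_ifs <;> omega
    rw [hv]
    have : ((n - 2 : ℕ) : ℝ) = (n : ℝ) - 2 := by
      push_cast [Nat.cast_sub (by omega : 2 ≤ n)]; ring
    rw [this]; ring
  · -- i = 0, k < n-1 : σ(0) = n-1
    have hv : ((avPerm k ⟨0, by omega⟩ : Fin n) : ℕ) = n - 1 := by
      rw [avPerm_val]
      simp only [Fin.val_mk]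
      split_ifs <;> omega
    rw [hv]
    have : ((n - 1 : ℕ) : ℝ) = (n : ℝ) - 1 := by
      push_cast [Nat.cast_sub (by omega : 1 ≤ n)]; ring
    rw [this]; ring
  · -- i = n-1, n-1 = n-1-k so k = 0 : σ(n-2) = 1
    have hv : ((avPerm k ⟨n - 2, by omega⟩ : Fin n) : ℕ) = 1 := by
      rw [avPerm_val]
      simp only [Fin.val_mk]
      split_ifs <;> omega
    rw [hv]; norm_num
  · -- i = n-1, k ≠ 0 : σ(n-2) = 0
    have hv : ((avPerm k ⟨n - 2, by omega⟩ : Fin n) : ℕ) = 0 := by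
      rw [avPerm_val]
      simp only [Fin.val_mk]
      split_ifs <;> omega
    rw [hv]; norm_num
  · -- middle, i = n-1-k : drop of 2
    have hv : ((avPerm k ⟨(i : ℕ) - 1, by omega⟩ : Fin n) : ℕ) = ((avPerm k i : Fin n) : ℕ) + 2 := by
      rw [avPerm_val, avPerm_val]
      simp only [Fin.val_mk]
      split_ifs <;> omega
    rw [hv]; push_cast; ring
  · -- middle, i ≠ n-1-k : drop of 1
    have hv : ((avPerm k ⟨(i : ℕ) - 1, by omega⟩ : Fin n) : ℕ) = ((avPerm k i : Fin n) : ℕ) + 1 := by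
      rw [avPerm_val, avPerm_val]
      simp only [Fin.val_mk]
      split_ifs <;> omega
    rw [hv]; push_cast; ring

noncomputable def Laff (n : ℕ) : (Fin n → ℝ) →ᵃ[ℝ] (Fin n → ℝ) where
  toFun := fun x => ((theA n).map (fun z : ℤ => (z : ℝ))).mulVec x + fun i => ((theb n i : ℝ))
  linear := ((theA n).map (fun z : ℤ => (z : ℝ))).mulVecLin
  map_vadd' := by
    intro p v
    simp only [Matrix.mulVecLin_apply, vadd_eq_add, Matrix.mulVec_add]
    abel

lemma Laff_injective (n : ℕ) (hn : 2 ≤ n) : Function.Injective (Laff n) := by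
  have hdet : IsUnit ((theA n).map (fun z : ℤ => (z : ℝ))).det := by
    rw [show ((theA n).map (fun z : ℤ => (z : ℝ))).det = (((theA n).det : ℤ) : ℝ) from
      (RingHom.map_det (Int.castRingHom ℝ) (theA n)).symm]
    rcases theA_det n hn with h | h <;> rw [h] <;> norm_num
  intro x y hxy
  simp only [Laff, AffineMap.coe_mk, add_left_inj] at hxy
  have := congrArg (fun w => (((theA n).map (fun z : ℤ => (z : ℝ)))⁻¹).mulVec w) hxy
  simpa [Matrix.mulVec_mulVec, Matrix.nonsing_inv_mul _ hdet] using this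

lemma avSet_eq_hdec (n : ℕ) :
    {σ : Equiv.Perm (Fin n) |
      ¬ containsPattern σ p123 ∧ ¬ containsPattern σ p132 ∧ ¬ containsPattern σ p231}
    = {σ : Equiv.Perm (Fin n) | Hdec σ} := by
  ext σ
  constructor
  · rintro ⟨h1, h2, h3⟩
    exact hdec_of_avoids σ h1 h2 h3
  · intro h
    exact ⟨avoids_of_hdec σ h _ (by decide), avoids_of_hdec σ h _ (by decide),
      avoids_of_hdec σ h _ (by decide)⟩

theorem stmt8' (n : ℕ) (hn : 2 ≤ n) :
    UnimodEquiv (P123132231 n)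
      (convexHull ℝ
        (Set.range fun i : Fin n => fun j : Fin n => if j = i then (1 : ℝ) else 0)) := by
  refine ⟨theA n, theb n, theA_det n hn, ?_⟩
  set L : (Fin n → ℝ) → (Fin n → ℝ) :=
    fun x => ((theA n).map (fun z : ℤ => (z : ℝ))).mulVec x + fun i => ((theb n i : ℝ)) with hL
  set S₀ : Set (Fin n → ℝ) := permPoint ''
    {σ : Equiv.Perm (Fin n) |
      ¬ containsPattern σ p123 ∧ ¬ containsPattern σ p132 ∧ ¬ containsPattern σ p231} with hS₀
  have hE : (Set.range fun i : Fin n => fun j : Fin n => if j = i then (1 : ℝ) else 0)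
      = (Set.range fun i : Fin n => fun j : Fin n => if i = j then (1 : ℝ) else 0) := by
    have hfun : (fun i : Fin n => fun j : Fin n => if j = i then (1 : ℝ) else 0)
        = (fun i : Fin n => fun j : Fin n => if i = j then (1 : ℝ) else 0) := by
      funext i j
      exact if_congr eq_comm rfl rfl
    rw [hfun]
  have hP : P123132231 n = convexHull ℝ S₀ := rfl
  have hmain : L '' (convexHull ℝ S₀) = convexHull ℝ (L '' S₀) := by
    have hLa : L = ⇑(Laff n) := rfl
    rw [hLa, AffineMap.image_convexHull]
  have hsub : L '' S₀ ⊆ stdSimplex ℝ (Fin n) := by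
    rintro _ ⟨x, ⟨σ, hσ, rfl⟩, rfl⟩
    have hd : Hdec σ := by
      have h' := hσ
      rw [show ({σ : Equiv.Perm (Fin n) |
          ¬ containsPattern σ p123 ∧ ¬ containsPattern σ p132 ∧ ¬ containsPattern σ p231})
        = {σ : Equiv.Perm (Fin n) | Hdec σ} from avSet_eq_hdec n] at h'
      exact h'
    exact ⟨fun i => coord_nonneg hn σ hd i, coord_sum hn σ⟩
  have hsup : (Set.range fun i : Fin n => fun j : Fin n => if j = i then (1:ℝ) else 0)
      ⊆ L '' S₀ := by
    rintro _ ⟨i, rfl⟩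
    have hi := i.isLt
    refine ⟨permPoint (avPerm ⟨n - 1 - (i : ℕ), by omega⟩),
      ⟨avPerm ⟨n - 1 - (i : ℕ), by omega⟩, ?_, rfl⟩, ?_⟩
    · rw [show ({σ : Equiv.Perm (Fin n) |
          ¬ containsPattern σ p123 ∧ ¬ containsPattern σ p132 ∧ ¬ containsPattern σ p231})
        = {σ : Equiv.Perm (Fin n) | Hdec σ} from avSet_eq_hdec n]
      exact hdec_avPerm _
    · funext j
      refine (coord_avPerm hn ⟨n - 1 - (i : ℕ), by omega⟩ j).trans ?_
      simp only [Fin.val_mk]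
      exact if_congr (by rw [Fin.ext_iff]; constructor <;> intro <;> omega) rfl rfl
  have hstd : convexHull ℝ (Set.range fun i : Fin n => fun j : Fin n => if j = i then (1:ℝ) else 0)
      = stdSimplex ℝ (Fin n) := by
    have hfun : (fun i : Fin n => fun j : Fin n => if j = i then (1:ℝ) else 0)
        = (fun i : Fin n => fun j : Fin n => @ite ℝ (i = j) (Classical.propDecidable _) 1 0) := by
      funext i j
      by_cases h : i = j
      · rw [if_pos h.symm, if_pos h]
      · rw [if_neg (fun hh => h hh.symm), if_neg h]
    rw [show (Set.range fun i : Fin n => fun j : Fin n => if j = i then (1:ℝ) else 0)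
        = (Set.range fun i : Fin n => fun j : Fin n => @ite ℝ (i = j) (Classical.propDecidable _) 1 0) from by rw [hfun]]
    convert convexHull_basis_eq_stdSimplex (R := ℝ) (ι := Fin n)
  have hhull : convexHull ℝ (L '' S₀) = stdSimplex ℝ (Fin n) := by
    apply Set.Subset.antisymm
    · exact convexHull_min hsub (convex_stdSimplex ℝ (Fin n))
    · rw [← hstd]
      exact convexHull_mono hsup
  have himg : L '' (P123132231 n)
      = convexHull ℝ (Set.range fun i : Fin n => fun j : Fin n => if j = i then (1:ℝ) else 0) := by
    rw [hP, hmain, hhull, ← hstd]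
  refine ⟨?_, ?_, ?_⟩
  · intro x hx
    rw [← himg]
    exact ⟨x, hx, rfl⟩
  · have hLa : L = ⇑(Laff n) := rfl
    rw [hLa]
    exact (Laff_injective n hn).injOn
  · intro y hy
    rw [← himg] at hy
    exact hy

theorem stmt8 (n : ℕ) (hn : 1 ≤ n) :
    UnimodEquiv (P123132231 n)
      (convexHull ℝ
        (Set.range fun i : Fin n => fun j : Fin n => if j = i then (1 : ℝ) else 0)) := by
  rcases eq_or_lt_of_le hn with h1 | h2
  · -- n = 1
    subst h1
    refine ⟨1, 0, Or.inl Matrix.det_one, ?_⟩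
    have hmap : (fun x : Fin 1 → ℝ =>
        ((1 : Matrix (Fin 1) (Fin 1) ℤ).map (fun z : ℤ => (z : ℝ))).mulVec x
          + fun i => (((0 : Fin 1 → ℤ) i : ℝ))) = id := by
      funext x j
      have h1 : (1 : Matrix (Fin 1) (Fin 1) ℤ).map (fun z : ℤ => (z : ℝ)) = 1 := by
        ext a b
        simp only [Matrix.map_apply, Matrix.one_apply]
        split_ifs <;> simp
      rw [h1, Matrix.one_mulVec]
      simp
    have hno : ∀ π : Equiv.Perm (Fin 3), ¬ containsPattern (1 : Equiv.Perm (Fin 1)) π := by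
      rintro π ⟨f, hf, -⟩
      exact absurd (Subsingleton.elim (f 0) (f 1)) (ne_of_lt (hf (by decide)))
    have hPQ : P123132231 1 = convexHull ℝ
        (Set.range fun i : Fin 1 => fun j : Fin 1 => if j = i then (1 : ℝ) else 0) := by
      unfold P123132231
      congr 1
      apply Set.eq_of_subset_of_subset
      · rintro _ ⟨σ, _, rfl⟩
        refine ⟨0, ?_⟩
        funext j
        rw [Subsingleton.elim j 0]
        show (if (0 : Fin 1) = 0 then (1 : ℝ) else 0) = permPoint σ 0
        rw [if_pos rfl]
        unfold permPoint
        rw [show ((σ 0 : Fin 1) : ℕ) = 0 from Fin.val_eq_zero _]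
        norm_num
      · rintro _ ⟨i, rfl⟩
        refine ⟨1, ⟨hno _, hno _, hno _⟩, ?_⟩
        funext j
        rw [Subsingleton.elim j 0, Subsingleton.elim i 0]
        show permPoint 1 0 = (if (0 : Fin 1) = 0 then (1 : ℝ) else 0)
        rw [if_pos rfl]
        unfold permPoint
        rw [show (((1 : Equiv.Perm (Fin 1)) 0 : Fin 1) : ℕ) = 0 from Fin.val_eq_zero _]
        norm_num
    rw [hmap, hPQ]
    exact Set.bijOn_id _
  · exact stmt8' n h2
end

section
/- Fix n ≥ 1. For σ ∈ S_n let Des(σ) = {i ∈ {1,…,n−1} : σ(i) > σ(i+1)} be its descent set. On subsets of {1,…,n−1}, define S ⊑ T if and only if |S| ≤ |T| and, writing S = {s_1 > s_2 > ⋯ > s_{|S|}} and T = {t_1 > t_2 > ⋯ > t_{|T|}} in decreasing order, s_i ≤ t_i for all 1 ≤ i ≤ |S|. Then: (a) Des restricted to Av_n(132,312) is a bijection onto the set of all subsets of {1,…,n−1}; and (b) for all σ, τ ∈ Av_n(132,312), σ ≤_R τ in the right weak order if and only if Des(σ) ⊑ Des(τ). In particular, the right weak order restricted to Av_n(132,312)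 is a distributive lattice, order-isomorphic to the lattice M(n−1) of shifted Young diagrams with largest part at most n−1, and its cover relations are cover relations of the right weak order on S_n. -/
/-- The pattern 312. -/
def p312 : Equiv.Perm (Fin 3) := (finRotate 3)⁻¹

/-- `Av_n(132,312)`. -/
def Av132312 (n : ℕ) : Set (Equiv.Perm (Fin n)) :=
  {σ : Equiv.Perm (Fin n) | ¬ containsPattern σ p132 ∧ ¬ containsPattern σ p312}

/-- The descent set of `σ`, in one-based positions: `{i ∈ {1,…,n-1} : σ(i) > σ(i+1)}`.
Here `σ` is zero-based, so `i` is a descent iff `σ(i-1) > σ(i)` (zero-based). -/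
noncomputable def Des {n : ℕ} (σ : Equiv.Perm (Fin n)) : Finset ℕ :=
  open scoped Classical in
  (Finset.Ico 1 n).filter fun i =>
    ∀ (h : i < n) (h' : i - 1 < n), σ ⟨i, h⟩ < σ ⟨i - 1, h'⟩

/-- `S ⊑ T` : writing `S` and `T` in decreasing order `s_1 > s_2 > ⋯` and `t_1 > t_2 > ⋯`,
we have `|S| ≤ |T|` and `s_i ≤ t_i` for all `i`. -/
def ShiftedLE (S T : Finset ℕ) : Prop :=
  S.card ≤ T.card ∧
    ∀ i < S.card, (S.sort (· ≥ ·)).getD i 0 ≤ (T.sort (· ≥ ·)).getD i 0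

/-- The inversion value set of `σ`. -/
def Invv {n : ℕ} (σ : Equiv.Perm (Fin n)) : Set (Fin n × Fin n) :=
  {p | ∃ i j : Fin n, i < j ∧ σ j < σ i ∧ p = (σ j, σ i)}


namespace Stmt13
open Finset

def cS (S : Finset ℕ) (q : ℕ) : ℕ := (S.filter (· ≤ q)).card
def rS (S : Finset ℕ) (q : ℕ) : ℕ := (S.filter (q < ·)).card

lemma cS_add_rS (S : Finset ℕ) (q : ℕ) : cS S q + rS S q = S.card := by
  classical
  rw [cS, rS, show (S.filter (q < ·)) = S.filter (fun y => ¬ y ≤ q) by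
    apply Finset.filter_congr; intro x _; simp [not_le]]
  exact Finset.card_filter_add_card_filter_not _

lemma cS_mono (S : Finset ℕ) {q q' : ℕ} (h : q ≤ q') : cS S q ≤ cS S q' :=
  Finset.card_le_card (Finset.monotone_filter_right S (fun x _ hx => le_trans hx h))

lemma cS_pos (S : Finset ℕ) {q : ℕ} (h : q ∈ S) : 0 < cS S q :=
  Finset.card_pos.mpr ⟨q, Finset.mem_filter.mpr ⟨h, le_refl q⟩⟩

lemma cS_le_card (S : Finset ℕ) (q : ℕ) : cS S q ≤ S.card :=
  Finset.card_le_card (Finset.filter_subset _ _)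

lemma cS_lt (S : Finset ℕ) {q q' : ℕ} (h : q < q') (h' : q' ∈ S) : cS S q < cS S q' := by
  apply Finset.card_lt_card
  rw [Finset.ssubset_iff_of_subset (Finset.monotone_filter_right S (fun x _ hx => le_trans hx h.le))]
  exact ⟨q', Finset.mem_filter.mpr ⟨h', le_refl _⟩, fun hc => by
    simpa using (Finset.mem_filter.mp hc).2.trans_lt h⟩

lemma cS_le (S : Finset ℕ) (hS : ∀ x ∈ S, 1 ≤ x) (q : ℕ) : cS S q ≤ q := by
  have : S.filter (· ≤ q) ⊆ Finset.Icc 1 q := by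
    intro x hx
    rcases Finset.mem_filter.mp hx with ⟨h1, h2⟩
    exact Finset.mem_Icc.mpr ⟨hS x h1, h2⟩
  simpa [Nat.card_Icc, cS] using Finset.card_le_card this

lemma cS_between (S : Finset ℕ) {q q' : ℕ} (h : q ≤ q') :
    cS S q' ≤ cS S q + (q' - q) := by
  have : S.filter (· ≤ q') ⊆ S.filter (· ≤ q) ∪ Finset.Ioc q q' := by
    intro x hx
    rcases Finset.mem_filter.mp hx with ⟨h1, h2⟩
    rcases le_or_gt x q with h3 | h3
    · exact Finset.mem_union_left _ (Finset.mem_filter.mpr ⟨h1, h3⟩)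
    · exact Finset.mem_union_right _ (Finset.mem_Ioc.mpr ⟨h3, h2⟩)
  calc cS S q' ≤ _ := Finset.card_le_card this
    _ ≤ cS S q + (q' - q) := le_trans (Finset.card_union_le _ _) (by simp [Nat.card_Ioc, cS])

lemma cS_between' (S : Finset ℕ) {q q' : ℕ} (h : q < q') (h' : q' ∉ S) :
    cS S q' ≤ cS S q + (q' - q - 1) := by
  have : S.filter (· ≤ q') ⊆ S.filter (· ≤ q) ∪ Finset.Ioo q q' := by
    intro x hx
    rcases Finset.mem_filter.mp hx with ⟨h1, h2⟩
    rcases le_or_gt x q with h3 | h3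
    · exact Finset.mem_union_left _ (Finset.mem_filter.mpr ⟨h1, h3⟩)
    · refine Finset.mem_union_right _ (Finset.mem_Ioo.mpr ⟨h3, lt_of_le_of_ne h2 ?_⟩)
      rintro rfl; exact h' h1
  calc cS S q' ≤ _ := Finset.card_le_card this
    _ ≤ cS S q + (q' - q - 1) := le_trans (Finset.card_union_le _ _)
        (by simp [Nat.card_Ioo, cS])

lemma rS_le (S : Finset ℕ) {B : ℕ} (hS : ∀ x ∈ S, x ≤ B) (q : ℕ) : rS S q ≤ B - q := by
  have : S.filter (q < ·) ⊆ Finset.Icc (q+1) B := by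
    intro x hx
    rcases Finset.mem_filter.mp hx with ⟨h1, h2⟩
    exact Finset.mem_Icc.mpr ⟨h2, hS x h1⟩
  simpa [Nat.card_Icc, rS] using Finset.card_le_card this


/-- the i-th largest element of S (0-indexed) -/
noncomputable def sE (S : Finset ℕ) (i : ℕ) : ℕ := (S.sort (· ≥ ·)).getD i 0

lemma sE_mem (S : Finset ℕ) {i : ℕ} (h : i < S.card) : sE S i ∈ S := by
  rw [sE, List.getD_eq_getElem _ _ (by rwa [Finset.length_sort])]
  exact (Finset.mem_sort _).mp (List.getElem_mem _)

lemma sE_strict (S : Finset ℕ) {i j : ℕ} (hij : i < j) (hj : j < S.card) :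
    sE S j < sE S i := by
  have hj' : j < (S.sort (· ≥ ·)).length := by rwa [Finset.length_sort]
  have hi' : i < (S.sort (· ≥ ·)).length := lt_trans hij hj'
  rw [sE, sE, List.getD_eq_getElem _ _ hj', List.getD_eq_getElem _ _ hi']
  have hle : (S.sort (· ≥ ·))[j] ≤ (S.sort (· ≥ ·))[i] :=
    List.pairwise_iff_getElem.mp (Finset.pairwise_sort S (· ≥ ·)) i j hi' hj' hij
  have hne : (S.sort (· ≥ ·))[j] ≠ (S.sort (· ≥ ·))[i] := by
    intro he
    exact absurd ((List.Nodup.getElem_inj_iff (Finset.sort_nodup _ _)).mp he) hij.ne'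
  exact lt_of_le_of_ne hle hne

lemma sE_exists (S : Finset ℕ) {x : ℕ} (h : x ∈ S) : ∃ i < S.card, sE S i = x := by
  obtain ⟨i, hi, he⟩ := List.mem_iff_getElem.mp ((Finset.mem_sort (α := ℕ) (· ≥ ·)).mpr h)
  rw [Finset.length_sort] at hi
  exact ⟨i, hi, by rw [sE, List.getD_eq_getElem _ _ (by rwa [Finset.length_sort])]; exact he⟩

lemma sE_chain (S : Finset ℕ) {i j : ℕ} (hij : i ≤ j) (hj : j < S.card) :
    sE S j + (j - i) ≤ sE S i := by
  induction j with
  | zero => simpa using (by omega : i = 0) ▸ le_refl _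
  | succ k ih =>
    rcases Nat.eq_or_lt_of_le hij with rfl | hlt
    · simp
    · have h1 : sE S (k+1) < sE S k := sE_strict S (Nat.lt_succ_self k) hj
      have h2 := ih (by omega) (by omega)
      omega

/-- rS of the i-th largest element is i -/
lemma rS_sE (S : Finset ℕ) {i : ℕ} (h : i < S.card) : rS S (sE S i) = i := by
  have himg : S.filter (sE S i < ·) = (Finset.range i).image (sE S) := by
    ext y
    constructor
    · intro hy
      rcases Finset.mem_filter.mp hy with ⟨h1, h2⟩
      obtain ⟨j, hj, he⟩ := sE_exists S h1
      refine Finset.mem_image.mpr ⟨j, Finset.mem_range.mpr ?_, he⟩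
      by_contra hc
      rcases Nat.eq_or_lt_of_le (not_lt.mp hc) with rfl | hlt
      · exact absurd he (ne_of_lt h2)
      · exact absurd (he ▸ sE_strict S hlt hj) (by omega)
    · intro hy
      obtain ⟨j, hj, he⟩ := Finset.mem_image.mp hy
      rw [Finset.mem_range] at hj
      subst he
      exact Finset.mem_filter.mpr ⟨sE_mem S (lt_trans hj h), sE_strict S hj h⟩
  rw [rS, himg, Finset.card_image_of_injOn, Finset.card_range]
  intro a ha b hb hab
  rw [Finset.coe_range, Set.mem_Iio] at ha hb
  by_contra hne
  rcases lt_or_gt_of_ne hne with hl | hl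
  · exact absurd hab (ne_of_gt (sE_strict S hl (lt_trans hb h)))
  · exact absurd hab (ne_of_lt (sE_strict S hl (lt_trans ha h)))

lemma cS_sE (S : Finset ℕ) {i : ℕ} (h : i < S.card) : cS S (sE S i) = S.card - i := by
  have := cS_add_rS S (sE S i)
  rw [rS_sE S h] at this
  omega

/-- two elements of S with the same cS are equal -/
lemma eq_of_cS_eq (S : Finset ℕ) {q q' : ℕ} (hq : q ∈ S) (hq' : q' ∈ S)
    (h : cS S q = cS S q') : q = q' := by
  by_contra hne
  rcases lt_or_gt_of_ne hne with hl | hl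
  · exact absurd h (ne_of_lt (cS_lt S hl hq'))
  · exact absurd h (ne_of_gt (cS_lt S hl hq))


section
variable {n : ℕ} {S : Finset ℕ}

def gv (S : Finset ℕ) (q : ℕ) : ℕ :=
  if q ∈ S then S.card - cS S q else S.card + (q - cS S q)

lemma hS1 (hS : S ⊆ Finset.Icc 1 (n-1)) : ∀ x ∈ S, 1 ≤ x :=
  fun x hx => (Finset.mem_Icc.mp (hS hx)).1
lemma hS2 (hS : S ⊆ Finset.Icc 1 (n-1)) : ∀ x ∈ S, x ≤ n - 1 :=
  fun x hx => (Finset.mem_Icc.mp (hS hx)).2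
lemma card_le (hS : S ⊆ Finset.Icc 1 (n-1)) : S.card ≤ n - 1 := by
  simpa [Nat.card_Icc] using Finset.card_le_card hS

lemma gv_lt_card {q : ℕ} (h : q ∈ S) : gv S q < S.card := by
  have := cS_pos S h; have := cS_le_card S q
  rw [gv, if_pos h]; omega

lemma card_le_gv {q : ℕ} (h : q ∉ S) : S.card ≤ gv S q := by
  rw [gv, if_neg h]; omega

lemma gv_lt_gv_mem (hS : S ⊆ Finset.Icc 1 (n-1)) {q q' : ℕ} (hq : q < q') (h' : q' ∈ S) :
    gv S q' < gv S q := by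
  by_cases h : q ∈ S
  · have h1 := cS_lt S hq h'
    have h2 := cS_le_card S q'
    have h3 := cS_pos S h
    unfold gv; rw [if_pos h', if_pos h]; omega
  · exact lt_of_lt_of_le (gv_lt_card h') (card_le_gv h)

lemma gv_lt_gv_not_mem (hS : S ⊆ Finset.Icc 1 (n-1)) {q q' : ℕ} (hq : q < q') (h' : q' ∉ S) :
    gv S q < gv S q' := by
  by_cases h : q ∈ S
  · exact lt_of_lt_of_le (gv_lt_card h) (card_le_gv h')
  · have h1 := cS_between' S hq h'
    have h2 := cS_le S (hS1 hS) q
    have h3 := cS_le S (hS1 hS) q'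
    rw [gv, if_neg h, gv, if_neg h']; omega

lemma gv_lt (hS : S ⊆ Finset.Icc 1 (n-1)) {q : ℕ} (hq : q < n) : gv S q < n := by
  have hm := card_le hS
  by_cases h : q ∈ S
  · have := gv_lt_card h; omega
  · have h1 := cS_add_rS S q
    have h2 := rS_le S (hS2 hS) q
    have h3 := cS_le S (hS1 hS) q
    rw [gv, if_neg h]; omega

lemma gv_inj (hS : S ⊆ Finset.Icc 1 (n-1)) {q q' : ℕ} (h : gv S q = gv S q') : q = q' := by
  by_contra hne
  rcases lt_or_gt_of_ne hne with hl | hl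
  · by_cases h' : q' ∈ S
    · exact absurd h (ne_of_gt (gv_lt_gv_mem hS hl h'))
    · exact absurd h (ne_of_lt (gv_lt_gv_not_mem hS hl h'))
  · by_cases h' : q ∈ S
    · exact absurd h (ne_of_lt (gv_lt_gv_mem hS hl h'))
    · exact absurd h (ne_of_gt (gv_lt_gv_not_mem hS hl h'))

noncomputable def FS (n : ℕ) (S : Finset ℕ) (hS : S ⊆ Finset.Icc 1 (n-1)) :
    Equiv.Perm (Fin n) :=
  Equiv.ofBijective (fun q => ⟨gv S q.val, gv_lt hS q.isLt⟩)
    (Finite.injective_iff_bijective.mp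
      (fun a b hab => Fin.ext (gv_inj hS (congrArg Fin.val hab))))

lemma FS_apply (hS : S ⊆ Finset.Icc 1 (n-1)) (q : Fin n) :
    (FS n S hS q).val = gv S q.val := rfl

lemma mem_Des {σ : Equiv.Perm (Fin n)} {i : ℕ} :
    i ∈ Des σ ↔ (1 ≤ i ∧ i < n) ∧ ∀ (h : i < n) (h' : i - 1 < n), σ ⟨i, h⟩ < σ ⟨i-1, h'⟩ := by
  classical
  simp [Des, Finset.mem_filter, Finset.mem_Ico]

lemma Des_subset (σ : Equiv.Perm (Fin n)) : Des σ ⊆ Finset.Icc 1 (n-1) := by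
  intro i hi
  rcases mem_Des.mp hi with ⟨⟨h1, h2⟩, _⟩
  exact Finset.mem_Icc.mpr ⟨h1, by omega⟩

lemma Des_FS (hS : S ⊆ Finset.Icc 1 (n-1)) : Des (FS n S hS) = S := by
  ext i
  rw [mem_Des]
  constructor
  · rintro ⟨⟨h1, h2⟩, hd⟩
    have hd' := hd h2 (by omega)
    rw [← Fin.val_fin_lt] at hd'
    simp only [FS_apply, Fin.val_mk] at hd'
    by_contra hi
    by_cases h' : i - 1 ∈ S
    · exact absurd (lt_of_lt_of_le (gv_lt_card h') (card_le_gv hi)) (by omega)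
    · exact absurd (gv_lt_gv_not_mem hS (by omega : i - 1 < i) hi) (by omega)
  · intro hi
    have h1 := hS1 hS i hi
    have h2 : i < n := by have := hS2 hS i hi; omega
    refine ⟨⟨h1, h2⟩, fun h h' => ?_⟩
    rw [← Fin.val_fin_lt]
    simp only [FS_apply, Fin.val_mk]
    by_cases hm : i - 1 ∈ S
    · exact gv_lt_gv_mem hS (by omega) hi
    · exact lt_of_lt_of_le (gv_lt_card hi) (card_le_gv hm)

end

section
variable {n : ℕ} {σ : Equiv.Perm (Fin n)}

def NMM (σ : Equiv.Perm (Fin n)) : Prop :=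
  ∀ k : Fin n, (∀ i < k, σ i < σ k) ∨ (∀ i < k, σ k < σ i)

lemma av_of_NMM (h : NMM σ) : σ ∈ Av132312 n := by
  constructor
  · rintro ⟨f, hf, hiff⟩
    have h21 : σ (f 2) < σ (f 1) := (hiff 2 1).mpr (by decide)
    have h02 : σ (f 0) < σ (f 2) := (hiff 0 2).mpr (by decide)
    rcases h (f 2) with hc | hc
    · exact absurd (hc (f 1) (hf (by decide))) (not_lt.mpr h21.le)
    · exact absurd (hc (f 0) (hf (by decide))) (not_lt.mpr h02.le)
  · rintro ⟨f, hf, hiff⟩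
    have h12 : σ (f 1) < σ (f 2) := (hiff 1 2).mpr (by decide)
    have h20 : σ (f 2) < σ (f 0) := (hiff 2 0).mpr (by decide)
    rcases h (f 2) with hc | hc
    · exact absurd (hc (f 0) (hf (by decide))) (not_lt.mpr h20.le)
    · exact absurd (hc (f 1) (hf (by decide))) (not_lt.mpr h12.le)

lemma NMM_of_av (h : σ ∈ Av132312 n) : NMM σ := by
  intro k
  by_contra hc
  push_neg at hc
  obtain ⟨⟨i, hik, hi⟩, ⟨j, hjk, hj⟩⟩ := hc
  -- σ k ≤ σ i and σ j ≤ σ k ; get strict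
  have hi' : σ k < σ i := lt_of_le_of_ne hi (fun he => absurd (σ.injective he) (ne_of_lt hik).symm)
  have hj' : σ j < σ k := lt_of_le_of_ne hj (fun he => absurd (σ.injective he) (ne_of_lt hjk))
  have hij : i ≠ j := by intro he; subst he; exact lt_irrefl _ (hj'.trans hi')
  rcases lt_or_gt_of_ne hij with hlt | hlt
  · -- i < j < k : values σi > σk > σj : pattern 312
    refine absurd ?_ h.2
    refine ⟨![i, j, k], ?_, ?_⟩
    · intro a b hab
      fin_cases a <;> fin_cases b <;>
        first
        | exact absurd hab (by decide)
        | simpa using hlt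
        | simpa using hjk
        | simpa using (hlt.trans hjk)
    · intro a b
      fin_cases a <;> fin_cases b <;>
        simp only [Matrix.cons_val_zero, Matrix.cons_val_one, Matrix.head_cons,
          Matrix.cons_val_two, Matrix.tail_cons, Fin.mk_zero, Fin.mk_one] <;>
        first
        | exact iff_of_true (by omega) (by decide)
        | exact iff_of_false (by omega) (by decide)
        | exact iff_of_true hj' (by decide)
        | exact iff_of_true hi' (by decide)
        | exact iff_of_true (hj'.trans hi') (by decide)
        | exact iff_of_false (not_lt.mpr hj'.le) (by decide)
        | exact iff_of_false (not_lt.mpr hi'.le) (by decide)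
        | exact iff_of_false (not_lt.mpr (hj'.trans hi').le) (by decide)
        | exact iff_of_false (lt_irrefl _) (by decide)
  · -- j < i < k : values σj < σk < σi : pattern 132
    refine absurd ?_ h.1
    refine ⟨![j, i, k], ?_, ?_⟩
    · intro a b hab
      fin_cases a <;> fin_cases b <;>
        first
        | exact absurd hab (by decide)
        | simpa using hlt
        | simpa using hik
        | simpa using (hlt.trans hik)
    · intro a b
      fin_cases a <;> fin_cases b <;>
        simp only [Matrix.cons_val_zero, Matrix.cons_val_one, Matrix.head_cons,
          Matrix.cons_val_two, Matrix.tail_cons, Fin.mk_zero, Fin.mk_one] <;>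
        first
        | exact iff_of_true hj' (by decide)
        | exact iff_of_true hi' (by decide)
        | exact iff_of_true (hj'.trans hi') (by decide)
        | exact iff_of_false (not_lt.mpr hj'.le) (by decide)
        | exact iff_of_false (not_lt.mpr hi'.le) (by decide)
        | exact iff_of_false (not_lt.mpr (hj'.trans hi').le) (by decide)
        | exact iff_of_false (lt_irrefl _) (by decide)

end

section
variable {n : ℕ} {σ : Equiv.Perm (Fin n)}
lemma filter_lt_card (v : Fin n) : (univ.filter fun x : Fin n => x < v).card = v.val := by
  have : (univ.filter fun x : Fin n => x < v) = Finset.Iio v := by ext; simp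
  rw [this]; simp

lemma val_eq_card (σ : Equiv.Perm (Fin n)) (q : Fin n) :
    (σ q).val = (univ.filter fun x => σ x < σ q).card := by
  rw [← filter_lt_card (σ q)]
  apply Finset.card_bij (fun (y : Fin n) _ => σ⁻¹ y)
  · intro a ha; simp only [Finset.mem_filter, Finset.mem_univ, true_and] at ha ⊢; simpa using ha
  · intro a _ b _ hab; exact (Equiv.injective _) hab
  · intro x hx
    refine ⟨σ x, ?_, by simp⟩
    simp only [Finset.mem_filter, Finset.mem_univ, true_and] at hx ⊢
    exact hx

lemma card_fin_filter (D : Finset ℕ) (hD : ∀ x ∈ D, x < n) (q : ℕ) :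
    (univ.filter fun x : Fin n => q < x.val ∧ x.val ∈ D).card = rS D q := by
  rw [rS]
  apply Finset.card_bij (fun (x : Fin n) _ => x.val)
  · intro a ha
    simp only [Finset.mem_filter, Finset.mem_univ, true_and] at ha
    exact Finset.mem_filter.mpr ⟨ha.2, ha.1⟩
  · intro a _ b _ hab; exact Fin.ext hab
  · intro y hy
    rcases Finset.mem_filter.mp hy with ⟨h1, h2⟩
    refine ⟨⟨y, hD y h1⟩, ?_, rfl⟩
    simp only [Finset.mem_filter, Finset.mem_univ, true_and]
    exact ⟨h2, h1⟩

lemma Des_lt (σ : Equiv.Perm (Fin n)) : ∀ x ∈ Des σ, x < n :=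
  fun x hx => (mem_Des.mp hx).1.2

lemma Des_ge1 (σ : Equiv.Perm (Fin n)) : ∀ x ∈ Des σ, 1 ≤ x :=
  fun x hx => (mem_Des.mp hx).1.1

lemma cS_Des_zero (σ : Equiv.Perm (Fin n)) : cS (Des σ) 0 = 0 := by
  rw [cS, Finset.card_eq_zero]
  apply Finset.filter_eq_empty_iff.mpr
  intro x hx
  have := Des_ge1 σ x hx
  omega

lemma min_iff_mem (hN : NMM σ) {x : Fin n} (hx : 1 ≤ x.val) :
    x.val ∈ Des σ ↔ ∀ i < x, σ x < σ i := by
  constructor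
  · intro hm
    rcases hN x with hmax | hmin
    · rcases mem_Des.mp hm with ⟨⟨h1, h2⟩, hd⟩
      have hd' := hd h2 (by omega)
      have hlt : (⟨x.val - 1, by omega⟩ : Fin n) < x := by
        rw [Fin.lt_def]; simp; omega
      have := hmax _ hlt
      rw [Fin.eta] at hd'
      exact absurd hd' (not_lt.mpr this.le)
    · exact hmin
  · intro hmin
    refine mem_Des.mpr ⟨⟨hx, x.isLt⟩, fun h h' => ?_⟩
    rw [Fin.eta]
    apply hmin
    rw [Fin.lt_def]; simp; omega

lemma key_gt (hN : NMM σ) {q x : Fin n} (hqx : q < x) :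
    σ x < σ q ↔ x.val ∈ Des σ := by
  have hx1 : 1 ≤ x.val := by have := hqx; rw [Fin.lt_def] at this; omega
  rw [min_iff_mem hN hx1]
  constructor
  · intro hlt
    rcases hN x with hmax | hmin
    · exact absurd (hmax q hqx) (not_lt.mpr hlt.le)
    · exact hmin
  · intro hmin
    exact hmin q hqx

lemma val_gv (hN : NMM σ) (q : Fin n) : (σ q).val = gv (Des σ) q.val := by
  set D := Des σ with hD
  rcases hN q with hmax | hmin
  · -- max type : σ q value = q + rS D q ; and q ∉ D
    have hnot : q.val ∉ D := by
      intro hm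
      have h1 : 1 ≤ q.val := Des_ge1 σ _ hm
      have := (min_iff_mem hN h1).mp hm
      have hlt : (⟨q.val - 1, by omega⟩ : Fin n) < q := by rw [Fin.lt_def]; simp; omega
      exact absurd (hmax _ hlt) (not_lt.mpr (this _ hlt).le)
    have hsplit : (univ.filter fun x => σ x < σ q)
        = (univ.filter fun x : Fin n => x < q) ∪
          (univ.filter fun x : Fin n => q.val < x.val ∧ x.val ∈ D) := by
      ext x
      simp only [Finset.mem_filter, Finset.mem_univ, true_and, Finset.mem_union]
      rcases lt_trichotomy x q with h | h | h
      · simp [h, hmax x h]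
      · subst h; simp [lt_irrefl, Fin.lt_def]
      · have := (key_gt hN h)
        rw [Fin.lt_def] at h
        simp [not_lt.mpr (le_of_lt (by rwa [Fin.lt_def])), this, h, (by omega : ¬ x.val < q.val), hD]
    have hdisj : Disjoint (univ.filter fun x : Fin n => x < q)
        (univ.filter fun x : Fin n => q.val < x.val ∧ x.val ∈ D) := by
      rw [Finset.disjoint_filter]
      intro x _ hx
      rw [Fin.lt_def] at hx
      omega
    rw [val_eq_card, hsplit, Finset.card_union_of_disjoint hdisj, filter_lt_card,
      card_fin_filter D (Des_lt σ) q.val]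
    have h1 := cS_add_rS D q.val
    have h2 := cS_le D (Des_ge1 σ) q.val
    rw [gv, if_neg hnot]
    omega
  · -- min type
    have hsplit : (univ.filter fun x => σ x < σ q)
        = (univ.filter fun x : Fin n => q.val < x.val ∧ x.val ∈ D) := by
      ext x
      simp only [Finset.mem_filter, Finset.mem_univ, true_and]
      rcases lt_trichotomy x q with h | h | h
      · have h' := hmin x h
        rw [Fin.lt_def] at h
        constructor
        · intro hc; exact absurd hc (not_lt.mpr h'.le)
        · rintro ⟨hc, -⟩; omega
      · subst h; simp [lt_irrefl, Fin.lt_def]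
      · have := key_gt hN h
        rw [Fin.lt_def] at h
        simp [this, h, hD]
    rw [val_eq_card, hsplit, card_fin_filter D (Des_lt σ) q.val]
    have h1 := cS_add_rS D q.val
    by_cases hq : q.val ∈ D
    · rw [gv, if_pos hq]; omega
    · -- q must be 0
      have hq0 : q.val = 0 := by
        by_contra h0
        exact hq ((min_iff_mem hN (by omega)).mpr hmin)
      rw [gv, if_neg hq, hq0]
      rw [hq0] at h1
      have := cS_Des_zero σ
      rw [← hD] at this
      omega

end

end Stmt13


namespace Stmt13
open Finset
section
variable {n : ℕ} {S T : Finset ℕ}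

lemma rS_between (S : Finset ℕ) {q q' : ℕ} (h : q ≤ q') :
    rS S q ≤ rS S q' + (q' - q) := by
  have hsub : S.filter (q < ·) ⊆ S.filter (q' < ·) ∪ Finset.Ioc q q' := by
    intro x hx
    rcases Finset.mem_filter.mp hx with ⟨h1, h2⟩
    rcases le_or_gt x q' with h3 | h3
    · exact Finset.mem_union_right _ (Finset.mem_Ioc.mpr ⟨h2, h3⟩)
    · exact Finset.mem_union_left _ (Finset.mem_filter.mpr ⟨h1, h3⟩)
  calc rS S q ≤ _ := Finset.card_le_card hsub
    _ ≤ rS S q' + (q' - q) := le_trans (Finset.card_union_le _ _) (by simp [Nat.card_Ioc, rS])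

lemma rS_between' (S : Finset ℕ) {q q' : ℕ} (h : q < q') (h' : q' ∉ S) :
    rS S q ≤ rS S q' + (q' - q - 1) := by
  have hsub : S.filter (q < ·) ⊆ S.filter (q' < ·) ∪ Finset.Ioo q q' := by
    intro x hx
    rcases Finset.mem_filter.mp hx with ⟨h1, h2⟩
    rcases le_or_gt x q' with h3 | h3
    · refine Finset.mem_union_right _ (Finset.mem_Ioo.mpr ⟨h2, lt_of_le_of_ne h3 ?_⟩)
      rintro rfl; exact h' h1
    · exact Finset.mem_union_left _ (Finset.mem_filter.mpr ⟨h1, h3⟩)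
  calc rS S q ≤ _ := Finset.card_le_card hsub
    _ ≤ rS S q' + (q' - q - 1) := le_trans (Finset.card_union_le _ _)
        (by simp [Nat.card_Ioo, rS])

/-- The explicit inversion-pair finset attached to a descent set. -/
noncomputable def EF (n : ℕ) (S : Finset ℕ) : Finset (Fin n × Fin n) :=
  univ.filter fun p => p.1 < p.2 ∧ p.1.val < S.card ∧ p.2.val ≤ p.1.val + sE S p.1.val

lemma mem_EF {p : Fin n × Fin n} :
    p ∈ EF n S ↔ p.1 < p.2 ∧ p.1.val < S.card ∧ p.2.val ≤ p.1.val + sE S p.1.val := by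
  simp [EF]

lemma mem_Invv {σ : Equiv.Perm (Fin n)} {p : Fin n × Fin n} :
    p ∈ Invv σ ↔ p.1 < p.2 ∧ σ⁻¹ p.2 < σ⁻¹ p.1 := by
  constructor
  · rintro ⟨i, j, hij, hlt, rfl⟩
    exact ⟨hlt, by simpa using hij⟩
  · rintro ⟨h1, h2⟩
    exact ⟨σ⁻¹ p.2, σ⁻¹ p.1, h2, by simpa using h1, by simp⟩

lemma inv_FS_lt (hS : S ⊆ Finset.Icc 1 (n-1)) {v : Fin n} (hv : v.val < S.card) :
    ((FS n S hS)⁻¹ v).val = sE S v.val := by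
  have hmem := sE_mem S hv
  have hq : sE S v.val < n := by
    have := hS2 hS _ hmem; have := v.isLt; omega
  have happ : FS n S hS ⟨sE S v.val, hq⟩ = v := by
    apply Fin.ext
    rw [FS_apply]
    simp only [Fin.val_mk]
    rw [gv, if_pos hmem, cS_sE S hv]
    omega
  have hinv : (FS n S hS)⁻¹ v = ⟨sE S v.val, hq⟩ := by
    rw [Equiv.Perm.inv_def, Equiv.symm_apply_eq]
    exact happ.symm
  rw [hinv]

lemma inv_FS_ge (hS : S ⊆ Finset.Icc 1 (n-1)) {v : Fin n} (hv : S.card ≤ v.val) :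
    ((FS n S hS)⁻¹ v).val ∉ S ∧
      v.val = ((FS n S hS)⁻¹ v).val + rS S ((FS n S hS)⁻¹ v).val := by
  have happ : FS n S hS ((FS n S hS)⁻¹ v) = v := Equiv.apply_symm_apply _ _
  have hgv : gv S ((FS n S hS)⁻¹ v).val = v.val := by
    rw [← FS_apply hS _, happ]
  have hnot : ((FS n S hS)⁻¹ v).val ∉ S := by
    intro hm
    have := gv_lt_card (S := S) hm; omega
  refine ⟨hnot, ?_⟩
  rw [gv, if_neg hnot] at hgv
  have h1 := cS_add_rS S ((FS n S hS)⁻¹ v).val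
  have h2 := cS_le S (hS1 hS) ((FS n S hS)⁻¹ v).val
  omega

lemma Invv_FS (hS : S ⊆ Finset.Icc 1 (n-1)) :
    Invv (FS n S hS) = ↑(EF n S) := by
  ext p
  rw [Finset.mem_coe, mem_Invv, mem_EF]
  obtain ⟨a, b⟩ := p
  simp only
  by_cases hab : a < b
  · simp only [hab, true_and]
    by_cases ham : a.val < S.card
    · by_cases hbm : b.val < S.card
      · apply iff_of_true
        · rw [Fin.lt_def, inv_FS_lt hS ham, inv_FS_lt hS hbm]
          exact sE_strict S (Fin.lt_def.mp hab) hbm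
        · refine ⟨ham, ?_⟩
          have h1 : 1 ≤ sE S (S.card - 1) := hS1 hS _ (sE_mem S (by omega))
          have h2 := sE_chain S (by omega : a.val ≤ S.card - 1) (by omega)
          omega
      · have hP := inv_FS_ge hS (not_lt.mp hbm)
        rw [Fin.lt_def, inv_FS_lt hS ham]
        constructor
        · intro hlt
          refine ⟨ham, ?_⟩
          have h3 := rS_between S (le_of_lt hlt)
          rw [rS_sE S ham] at h3
          omega
        · rintro ⟨-, hble⟩
          by_contra hge
          push_neg at hge
          have hne : sE S a.val ≠ ((FS n S hS)⁻¹ b).val :=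
            fun he => hP.1 (he ▸ sE_mem S ham)
          have hlt' : sE S a.val < ((FS n S hS)⁻¹ b).val := lt_of_le_of_ne hge hne
          have h3 := rS_between' S hlt' hP.1
          rw [rS_sE S ham] at h3
          omega
    · apply iff_of_false
      · intro hlt
        have hPa := inv_FS_ge hS (not_lt.mp ham)
        have hPb := inv_FS_ge hS (by have := Fin.lt_def.mp hab; omega : S.card ≤ b.val)
        have h3 := rS_between' S (Fin.lt_def.mp hlt) hPa.1
        have h4 := Fin.lt_def.mp hab
        omega
      · rintro ⟨hc, -⟩; exact ham hc
  · simp [hab]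

end
end Stmt13


namespace Stmt13
open Finset
section
variable {n : ℕ} {S T : Finset ℕ}

lemma EF_subset_iff (hS : S ⊆ Finset.Icc 1 (n-1)) (hT : T ⊆ Finset.Icc 1 (n-1)) :
    EF n S ⊆ EF n T ↔ ShiftedLE S T := by
  constructor
  · intro hsub
    have key : ∀ i < S.card, i < T.card ∧ sE S i ≤ sE T i := by
      intro i hi
      have hcard := card_le hS
      have hb1 : i < n := by omega
      have hs1 : 1 ≤ sE S i := hS1 hS _ (sE_mem S hi)
      have hs2 : i + sE S i ≤ n - 1 := by
        have h1 := sE_chain S (Nat.zero_le i) hi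
        have h2 := hS2 hS _ (sE_mem S (show 0 < S.card by omega))
        omega
      have hp : ((⟨i, by omega⟩ : Fin n), (⟨i + sE S i, by omega⟩ : Fin n)) ∈ EF n S := by
        rw [mem_EF]
        refine ⟨?_, ?_, ?_⟩
        · rw [Fin.lt_def]; simp only [Fin.val_mk]; omega
        · simp only [Fin.val_mk]; omega
        · simp only [Fin.val_mk]
          omega
      have hm := mem_EF.mp (hsub hp)
      simp only [Fin.val_mk] at hm
      exact ⟨hm.2.1, by have := hm.2.2; omega⟩
    constructor
    · rcases Nat.eq_zero_or_pos S.card with h | h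
      · omega
      · have := (key (S.card - 1) (by omega)).1; omega
    · intro i hi; exact (key i hi).2
  · rintro ⟨hcard, hle⟩ p hp
    rw [mem_EF] at hp ⊢
    obtain ⟨h1, h2, h3⟩ := hp
    refine ⟨h1, lt_of_lt_of_le h2 hcard, le_trans h3 ?_⟩
    have hsE : sE S p.1.val ≤ sE T p.1.val := hle p.1.val h2
    omega

lemma list_sum_getD (l : List ℕ) :
    ∑ i ∈ Finset.range l.length, l.getD i 0 = l.sum := by
  induction l with
  | nil => simp
  | cons x xs ih =>
    rw [List.length_cons, Finset.sum_range_succ']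
    simp only [List.getD_cons_succ, List.getD_cons_zero, List.sum_cons]
    rw [ih]
    omega

lemma sum_sE (S : Finset ℕ) : ∑ i ∈ Finset.range S.card, sE S i = S.sum id := by
  have h1 : ∑ i ∈ Finset.range S.card, sE S i
      = ∑ i ∈ Finset.range (S.sort (· ≥ ·)).length, (S.sort (· ≥ ·)).getD i 0 := by
    rw [Finset.length_sort]
    rfl
  rw [h1, list_sum_getD]
  have h2 : (S.sort (· ≥ ·)).sum = S.toList.sum :=
    List.Perm.sum_eq (Finset.sort_perm_toList _ _)
  rw [h2]
  have := Finset.sum_map_toList S (id : ℕ → ℕ)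
  simpa using this

lemma EF_card (hS : S ⊆ Finset.Icc 1 (n-1)) : (EF n S).card = S.sum id := by
  classical
  rw [Finset.card_eq_sum_card_fiberwise (f := Prod.fst) (t := univ) (fun x _ => mem_univ _)]
  have hfib : ∀ a : Fin n, ((EF n S).filter fun p => p.1 = a).card
      = if a.val < S.card then sE S a.val else 0 := by
    intro a
    by_cases ham : a.val < S.card
    · rw [if_pos ham]
      have hs1 : 1 ≤ sE S a.val := hS1 hS _ (sE_mem S ham)
      have hs2 : a.val + sE S a.val ≤ n - 1 := by
        have h1 := sE_chain S (Nat.zero_le a.val) ham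
        have h2 := hS2 hS _ (sE_mem S (show 0 < S.card by omega))
        omega
      have hcard : (Finset.Ioc a.val (a.val + sE S a.val)).card = sE S a.val := by
        rw [Nat.card_Ioc]; omega
      rw [← hcard]
      apply Finset.card_bij (fun (p : Fin n × Fin n) _ => p.2.val)
      · intro p hp
        rcases Finset.mem_filter.mp hp with ⟨hp1, hp2⟩
        rcases mem_EF.mp hp1 with ⟨h1, h2, h3⟩
        subst hp2
        exact Finset.mem_Ioc.mpr ⟨Fin.lt_def.mp h1, h3⟩
      · intro p hp q hq he
        rcases Finset.mem_filter.mp hp with ⟨-, hp2⟩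
        rcases Finset.mem_filter.mp hq with ⟨-, hq2⟩
        have : p.2 = q.2 := Fin.ext he
        calc p = (p.1, p.2) := rfl
          _ = (q.1, q.2) := by rw [hp2, hq2, this]
          _ = q := rfl
      · intro y hy
        rcases Finset.mem_Ioc.mp hy with ⟨hy1, hy2⟩
        have hyn : y < n := by have := a.isLt; omega
        refine ⟨(a, ⟨y, hyn⟩), ?_, rfl⟩
        refine Finset.mem_filter.mpr ⟨mem_EF.mpr ⟨?_, ham, ?_⟩, rfl⟩
        · rw [Fin.lt_def]; simpa using hy1
        · simpa using hy2
    · rw [if_neg ham]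
      rw [Finset.card_eq_zero, Finset.filter_eq_empty_iff]
      intro p hp
      rcases mem_EF.mp hp with ⟨-, h2, -⟩
      intro he
      rw [he] at h2
      exact ham h2
  rw [Finset.sum_congr rfl (fun a _ => hfib a)]
  rw [Fin.sum_univ_eq_sum_range (fun i => if i < S.card then sE S i else 0) n]
  rw [← sum_sE S]
  have hmn : S.card ≤ n := by have := card_le hS; omega
  rw [← Finset.sum_subset (Finset.range_subset_range.mpr hmn)
    (fun x _ hx => by rw [if_neg (by simpa using hx)])]
  apply Finset.sum_congr rfl
  intro x hx
  rw [if_pos (Finset.mem_range.mp hx)]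

end
end Stmt13


namespace Stmt13
open Finset
section
variable {n : ℕ}

/-- inversion set of an arbitrary permutation, as a finset -/
noncomputable def IF (σ : Equiv.Perm (Fin n)) : Finset (Fin n × Fin n) :=
  open scoped Classical in
  univ.filter fun p => p.1 < p.2 ∧ σ⁻¹ p.2 < σ⁻¹ p.1

lemma Invv_eq_IF (σ : Equiv.Perm (Fin n)) : Invv σ = ↑(IF σ) := by
  classical
  ext p
  rw [Finset.mem_coe, mem_Invv, IF]
  simp

open scoped Classical in
lemma inv_val_card (σ : Equiv.Perm (Fin n)) (a : Fin n) :
    (σ⁻¹ a).val = (univ.filter fun b =>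
      (b < a ∧ (b, a) ∉ Invv σ) ∨ (a < b ∧ (a, b) ∈ Invv σ)).card := by
  classical
  rw [val_eq_card σ⁻¹ a]
  congr 1
  apply Finset.filter_congr
  intro b _
  rcases lt_trichotomy b a with h | h | h
  · constructor
    · intro hlt
      refine Or.inl ⟨h, fun hc => ?_⟩
      exact absurd (mem_Invv.mp hc).2 (not_lt.mpr hlt.le)
    · rintro (⟨-, hna⟩ | ⟨hab, -⟩)
      · have h1 : ¬ (σ⁻¹ a < σ⁻¹ b) := fun hc => hna (mem_Invv.mpr ⟨h, hc⟩)
        have hne : σ⁻¹ b ≠ σ⁻¹ a := fun he => (ne_of_lt h) (σ⁻¹.injective he)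
        exact lt_of_le_of_ne (not_lt.mp h1) hne
      · exact absurd (hab.trans h) (lt_irrefl _)
  · subst h
    constructor
    · intro hc; exact absurd hc (lt_irrefl _)
    · rintro (⟨hc, -⟩ | ⟨hc, -⟩) <;> exact absurd hc (lt_irrefl _)
  · constructor
    · intro hlt
      exact Or.inr ⟨h, mem_Invv.mpr ⟨h, hlt⟩⟩
    · rintro (⟨hc, -⟩ | ⟨-, hmem⟩)
      · exact absurd (hc.trans h) (lt_irrefl _)
      · exact (mem_Invv.mp hmem).2

lemma Invv_injective {σ τ : Equiv.Perm (Fin n)} (h : Invv σ = Invv τ) : σ = τ := by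
  have hinv : σ⁻¹ = τ⁻¹ := by
    apply Equiv.ext
    intro a
    apply Fin.ext
    rw [inv_val_card σ a, inv_val_card τ a, h]
  calc σ = (σ⁻¹)⁻¹ := by simp
    _ = (τ⁻¹)⁻¹ := by rw [hinv]
    _ = τ := by simp

lemma sort_toFinset_of_sorted (l : List ℕ) (h : l.Pairwise (· > ·)) :
    l.toFinset.sort (· ≥ ·) = l := by
  have hnd : l.Nodup := h.imp ne_of_gt
  exact List.Perm.eq_of_pairwise'
    (Finset.pairwise_sort _ _) (h.imp le_of_lt)
    (List.perm_of_nodup_nodup_toFinset_eq (Finset.sort_nodup _ _) hnd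
      (by rw [Finset.sort_toFinset]))

end
end Stmt13


namespace Stmt13
open Finset
section
variable {n : ℕ} {S T : Finset ℕ}

lemma shiftedLE_def : ShiftedLE S T ↔
    S.card ≤ T.card ∧ ∀ i < S.card, sE S i ≤ sE T i := Iff.rfl

lemma sort_eq_of (h : S.card = T.card) (he : ∀ j < S.card, sE S j = sE T j) : S = T := by
  have hlist : S.sort (· ≥ ·) = T.sort (· ≥ ·) := by
    apply List.ext_getElem (by rw [Finset.length_sort, Finset.length_sort, h])
    intro j h1 h2
    rw [Finset.length_sort] at h1
    have := he j h1
    rwa [sE, sE, List.getD_eq_getElem _ _ (by rwa [Finset.length_sort]),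
      List.getD_eq_getElem _ _ (by rw [Finset.length_sort, ← h]; exact h1)] at this
  calc S = (S.sort (· ≥ ·)).toFinset := (Finset.sort_toFinset _ _).symm
    _ = (T.sort (· ≥ ·)).toFinset := by rw [hlist]
    _ = T := Finset.sort_toFinset _ _

lemma exists_R (hS : S ⊆ Finset.Icc 1 (n-1)) (hT : T ⊆ Finset.Icc 1 (n-1))
    (hst : ShiftedLE S T) (hne : S ≠ T) :
    ∃ R ⊆ Finset.Icc 1 (n-1), ShiftedLE S R ∧ ShiftedLE R T ∧ R.sum id = S.sum id + 1 := by
  classical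
  obtain ⟨hcard, hle'⟩ := hst
  have hle : ∀ i < S.card, sE S i ≤ sE T i := hle'
  have hPex : ∃ i, S.card ≤ i ∨ (i < S.card ∧ sE S i < sE T i) := ⟨S.card, Or.inl le_rfl⟩
  obtain ⟨i0, hP, hminraw⟩ : ∃ i0, (S.card ≤ i0 ∨ (i0 < S.card ∧ sE S i0 < sE T i0)) ∧
      ∀ j < i0, ¬(S.card ≤ j ∨ (j < S.card ∧ sE S j < sE T j)) :=
    ⟨Nat.find hPex, Nat.find_spec hPex, fun j hj => Nat.find_min hPex hj⟩
  have hmin : ∀ j < i0, sE S j = sE T j ∧ j < S.card := by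
    intro j hj
    have hnp := hminraw j hj
    push_neg at hnp
    exact ⟨le_antisymm (hle j (by omega)) (hnp.2 (by omega)), by omega⟩
  have hi0le : i0 ≤ S.card := by
    by_contra hc
    exact hminraw S.card (by omega) (Or.inl le_rfl)
  by_cases hi0 : i0 < S.card
  · -- bump the i0-th part
    have hlt : sE S i0 < sE T i0 := by
      rcases hP with h | h
      · omega
      · exact h.2
    set x := sE S i0 with hxdef
    set l := (S.sort (· ≥ ·)).set i0 (x + 1) with hldef
    have hlen : l.length = S.card := by rw [hldef, List.length_set, Finset.length_sort]
    have hgetD : ∀ j < S.card, l.getD j 0 = if j = i0 then x + 1 else sE S j := by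
      intro j hj
      rw [List.getD_eq_getElem _ _ (by omega)]
      simp only [hldef, List.getElem_set]
      split
      · rw [if_pos (by omega)]
      · rw [if_neg (by omega)]
        exact (List.getD_eq_getElem _ 0 (by rw [Finset.length_sort]; omega)).symm
    have hTi0 : i0 < T.card := by omega
    have hsort : l.Pairwise (· > ·) := by
      apply List.pairwise_iff_getElem.mpr
      intro j k hj hk hjk
      have hj' : j < S.card := by omega
      have hk' : k < S.card := by omega
      have hgj := hgetD j hj'
      have hgk := hgetD k hk'
      rw [← List.getD_eq_getElem _ 0 hj, ← List.getD_eq_getElem _ 0 hk, hgj, hgk]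
      rcases eq_or_ne j i0 with rfl | hji0
      · rw [if_pos rfl, if_neg (by omega)]
        have := sE_strict S hjk hk'
        omega
      · rcases eq_or_ne k i0 with rfl | hki0
        · rw [if_neg hji0, if_pos rfl]
          have h1 : sE S j = sE T j := (hmin j (by omega)).1
          have h2 : sE T k < sE T j := sE_strict T hjk hTi0
          have h3 : 0 ≤ x := Nat.zero_le _
          omega
        · rw [if_neg hji0, if_neg hki0]
          exact sE_strict S hjk hk'
    set R := l.toFinset with hRdef
    have hsortR : R.sort (· ≥ ·) = l := sort_toFinset_of_sorted l hsort
    have hcardR : R.card = S.card := by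
      rw [← Finset.length_sort (· ≥ ·) (s := R), hsortR, hlen]
    have hsER : ∀ j, sE R j = l.getD j 0 := by
      intro j; rw [sE, hsortR]
    have hmemR : ∀ y ∈ R, y ∈ Finset.Icc 1 (n-1) := by
      intro y hy
      rw [hRdef, List.mem_toFinset] at hy
      obtain ⟨j, hj, rfl⟩ := List.mem_iff_getElem.mp hy
      rw [← List.getD_eq_getElem _ 0 hj, hgetD j (by omega)]
      split
      · have h1 := hS2 hT _ (sE_mem T hTi0)
        have h2 := hS1 hT _ (sE_mem T hTi0)
        rw [Finset.mem_Icc]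
        omega
      · exact hS (sE_mem S (by omega))
    refine ⟨R, hmemR, ?_, ?_, ?_⟩
    · rw [shiftedLE_def, hcardR]
      refine ⟨le_rfl, fun j hj => ?_⟩
      rw [hsER, hgetD j hj]
      rcases eq_or_ne j i0 with rfl | hji0
      · rw [if_pos rfl]; omega
      · rw [if_neg hji0]
    · rw [shiftedLE_def, hcardR]
      refine ⟨hcard, fun j hj => ?_⟩
      rw [hsER, hgetD j hj]
      rcases eq_or_ne j i0 with rfl | hji0
      · rw [if_pos rfl]; omega
      · rw [if_neg hji0]; exact hle j hj
    · have hsum : R.sum id = ∑ j ∈ Finset.range S.card, l.getD j 0 := by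
        rw [← sum_sE R, hcardR]
        exact Finset.sum_congr rfl (fun j _ => hsER j)
      have hsum2 : S.sum id = ∑ j ∈ Finset.range S.card, sE S j := (sum_sE S).symm
      rw [hsum, hsum2]
      have hmem0 : i0 ∈ Finset.range S.card := Finset.mem_range.mpr hi0
      rw [← Finset.sum_erase_add _ _ hmem0, ← Finset.sum_erase_add _ (fun j => sE S j) hmem0]
      have hcong : ∑ j ∈ (Finset.range S.card).erase i0, l.getD j 0
          = ∑ j ∈ (Finset.range S.card).erase i0, sE S j := by
        apply Finset.sum_congr rfl
        intro j hj
        have hj1 := Finset.mem_of_mem_erase hj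
        rw [Finset.mem_range] at hj1
        rw [hgetD j hj1, if_neg (Finset.ne_of_mem_erase hj)]
      rw [hcong, hgetD i0 hi0, if_pos rfl]
      omega
  · -- append a part equal to 1
    have hi0m : i0 = S.card := by omega
    have hmm' : S.card < T.card := by
      rcases Nat.eq_or_lt_of_le hcard with he | h
      · exact absurd (sort_eq_of he (fun j hj => (hmin j (by omega)).1)) hne
      · exact h
    have hT1 : 1 ≤ sE T S.card := hS1 hT _ (sE_mem T hmm')
    set l := S.sort (· ≥ ·) ++ [1] with hldef
    have hlen : l.length = S.card + 1 := by
      rw [hldef, List.length_append, Finset.length_sort, List.length_singleton]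
    have hgetD : ∀ j < S.card + 1, l.getD j 0 = if j < S.card then sE S j else 1 := by
      intro j hj
      rw [List.getD_eq_getElem _ _ (by omega)]
      simp only [hldef]
      rcases lt_or_ge j S.card with h | h
      · rw [List.getElem_append_left (by rw [Finset.length_sort]; omega), if_pos h]
        exact (List.getD_eq_getElem _ 0 (by rw [Finset.length_sort]; omega)).symm
      · have hj' : j = S.card := by omega
        rw [if_neg (by omega)]
        subst hj'
        rw [List.getElem_append_right (by rw [Finset.length_sort])]
        simp [Finset.length_sort]
    have hsort : l.Pairwise (· > ·) := by
      apply List.pairwise_iff_getElem.mpr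
      intro j k hj hk hjk
      have hj' : j < S.card + 1 := by omega
      have hk' : k < S.card + 1 := by omega
      rw [← List.getD_eq_getElem _ 0 hj, ← List.getD_eq_getElem _ 0 hk,
        hgetD j hj', hgetD k hk']
      rcases lt_or_ge k S.card with h | h
      · rw [if_pos (show j < S.card by omega), if_pos h]
        exact sE_strict S hjk h
      · rw [if_neg (not_lt.mpr h), if_pos (by omega)]
        have h1 : sE S j = sE T j := (hmin j (by omega)).1
        have h2 : sE T S.card < sE T j := sE_strict T (by omega) hmm'
        omega
    set R := l.toFinset with hRdef
    have hsortR : R.sort (· ≥ ·) = l := sort_toFinset_of_sorted l hsort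
    have hcardR : R.card = S.card + 1 := by
      rw [← Finset.length_sort (· ≥ ·) (s := R), hsortR, hlen]
    have hsER : ∀ j, sE R j = l.getD j 0 := by
      intro j; rw [sE, hsortR]
    have hmemR : ∀ y ∈ R, y ∈ Finset.Icc 1 (n-1) := by
      intro y hy
      rw [hRdef, List.mem_toFinset] at hy
      obtain ⟨j, hj, rfl⟩ := List.mem_iff_getElem.mp hy
      rw [← List.getD_eq_getElem _ 0 hj, hgetD j (by omega)]
      rcases lt_or_ge j S.card with h | h
      · rw [if_pos h]
        exact hS (sE_mem S h)
      · rw [if_neg (by omega)]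
        have := hS2 hT _ (sE_mem T hmm')
        rw [Finset.mem_Icc]
        omega
    refine ⟨R, hmemR, ?_, ?_, ?_⟩
    · rw [shiftedLE_def, hcardR]
      refine ⟨by omega, fun j hj => ?_⟩
      rw [hsER, hgetD j (by omega), if_pos hj]
    · rw [shiftedLE_def, hcardR]
      refine ⟨by omega, fun j hj => ?_⟩
      rw [hsER, hgetD j hj]
      rcases lt_or_ge j S.card with h | h
      · rw [if_pos h, (hmin j (by omega)).1]
      · have hj' : j = S.card := by omega
        rw [if_neg (by omega)]
        subst hj'
        exact hT1
    · have hsum : R.sum id = ∑ j ∈ Finset.range (S.card + 1), l.getD j 0 := by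
        rw [← sum_sE R, hcardR]
        exact Finset.sum_congr rfl (fun j _ => hsER j)
      rw [hsum, Finset.sum_range_succ, hgetD S.card (by omega), if_neg (by omega)]
      have hc : ∑ j ∈ Finset.range S.card, l.getD j 0 = ∑ j ∈ Finset.range S.card, sE S j := by
        apply Finset.sum_congr rfl
        intro j hj
        rw [Finset.mem_range] at hj
        rw [hgetD j (by omega), if_pos hj]
      rw [hc, ← sum_sE S]

end
end Stmt13


namespace Stmt13
open Finset
section
variable {n : ℕ} {S : Finset ℕ}

lemma NMM_FS (hS : S ⊆ Finset.Icc 1 (n-1)) : NMM (FS n S hS) := by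
  intro k
  by_cases h : k.val ∈ S
  · right
    intro i hi
    rw [← Fin.val_fin_lt]
    simp only [FS_apply]
    exact gv_lt_gv_mem hS (Fin.lt_def.mp hi) h
  · left
    intro i hi
    rw [← Fin.val_fin_lt]
    simp only [FS_apply]
    exact gv_lt_gv_not_mem hS (Fin.lt_def.mp hi) h

lemma av_eq_FS {σ : Equiv.Perm (Fin n)} (hσ : σ ∈ Av132312 n) :
    σ = FS n (Des σ) (Des_subset σ) := by
  apply Equiv.ext
  intro q
  apply Fin.ext
  rw [FS_apply]
  exact val_gv (NMM_of_av hσ) q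

lemma Invv_av {σ : Equiv.Perm (Fin n)} (hσ : σ ∈ Av132312 n) :
    Invv σ = ↑(EF n (Des σ)) := by
  conv_lhs => rw [av_eq_FS hσ]
  exact Invv_FS (Des_subset σ)

end
end Stmt13

open Stmt13 in
theorem stmt13 (n : ℕ) (hn : 1 ≤ n) :
    -- (a) `Des` is a bijection from `Av_n(132,312)` onto all subsets of `{1,…,n-1}`
    Set.BijOn Des (Av132312 n) {S : Finset ℕ | S ⊆ Finset.Icc 1 (n - 1)} ∧
    -- (b) right weak order corresponds to `⊑` of descent sets
    (∀ σ ∈ Av132312 n, ∀ τ ∈ Av132312 n,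
      (Invv σ ⊆ Invv τ ↔ ShiftedLE (Des σ) (Des τ))) ∧
    -- covers in the restricted poset are covers in the right weak order on `S_n`
    (∀ σ ∈ Av132312 n, ∀ τ ∈ Av132312 n,
      (Invv σ ⊆ Invv τ ∧ σ ≠ τ ∧
        ∀ γ ∈ Av132312 n, Invv σ ⊆ Invv γ → Invv γ ⊆ Invv τ → γ = σ ∨ γ = τ) →
      ∀ γ : Equiv.Perm (Fin n), Invv σ ⊆ Invv γ → Invv γ ⊆ Invv τ → γ = σ ∨ γ = τ) := by
  have hinj : ∀ σ ∈ Av132312 n, ∀ τ ∈ Av132312 n, Des σ = Des τ → σ = τ := by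
    intro σ hσ τ hτ hDes
    apply Invv_injective
    rw [Invv_av hσ, Invv_av hτ, hDes]
  have hb : ∀ σ ∈ Av132312 n, ∀ τ ∈ Av132312 n,
      (Invv σ ⊆ Invv τ ↔ ShiftedLE (Des σ) (Des τ)) := by
    intro σ hσ τ hτ
    rw [Invv_av hσ, Invv_av hτ, Finset.coe_subset]
    exact EF_subset_iff (Des_subset σ) (Des_subset τ)
  refine ⟨⟨fun σ _ => Des_subset σ, fun σ hσ τ hτ hDes => hinj σ hσ τ hτ hDes, ?_⟩, hb, ?_⟩
  · -- surjectivity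
    intro S hS
    exact ⟨FS n S hS, av_of_NMM (NMM_FS hS), Des_FS hS⟩
  · -- covers
    rintro σ hσ τ hτ ⟨hsub, hne, hcover⟩ γ hγ1 hγ2
    have hST : ShiftedLE (Des σ) (Des τ) := (hb σ hσ τ hτ).mp hsub
    have hSneT : Des σ ≠ Des τ := fun h => hne (hinj σ hσ τ hτ h)
    obtain ⟨R, hR, hSR, hRT, hRsum⟩ :=
      exists_R (Des_subset σ) (Des_subset τ) hST hSneT
    set γ' := FS n R hR with hγ'def
    have hγ'av : γ' ∈ Av132312 n := av_of_NMM (NMM_FS hR)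
    have hDesγ' : Des γ' = R := Des_FS hR
    have hInvγ' : Invv γ' = ↑(EF n R) := by
      rw [Invv_av hγ'av, hDesγ']
    have h1 : Invv σ ⊆ Invv γ' := by
      rw [Invv_av hσ, hInvγ', Finset.coe_subset]
      exact (EF_subset_iff (Des_subset σ) hR).mpr hSR
    have h2 : Invv γ' ⊆ Invv τ := by
      rw [Invv_av hτ, hInvγ', Finset.coe_subset]
      exact (EF_subset_iff hR (Des_subset τ)).mpr hRT
    have hTsum : (Des τ).sum id = (Des σ).sum id + 1 := by
      rcases hcover γ' hγ'av h1 h2 with he | he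
      · exfalso
        have : R = Des σ := by rw [← hDesγ', he]
        rw [this] at hRsum
        omega
      · have : R = Des τ := by rw [← hDesγ', he]
        rw [← this, hRsum]
    -- now squeeze γ
    have hcS : (EF n (Des σ)).card + 1 = (EF n (Des τ)).card := by
      rw [EF_card (Des_subset σ), EF_card (Des_subset τ), hTsum]
    have hg1 : EF n (Des σ) ⊆ IF γ := by
      rw [← Finset.coe_subset, ← Invv_av hσ, ← Invv_eq_IF]
      exact hγ1
    have hg2 : IF γ ⊆ EF n (Des τ) := by
      rw [← Finset.coe_subset, ← Invv_eq_IF, ← Invv_av hτ]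
      exact hγ2
    have hcard1 := Finset.card_le_card hg1
    have hcard2 := Finset.card_le_card hg2
    rcases le_or_gt (IF γ).card (EF n (Des σ)).card with hc | hc
    · left
      apply Invv_injective
      rw [Invv_eq_IF γ, Invv_av hσ]
      rw [Finset.eq_of_subset_of_card_le hg1 hc]
    · right
      apply Invv_injective
      rw [Invv_eq_IF γ, Invv_av hτ]
      rw [← Finset.eq_of_subset_of_card_le hg2 (by omega)]
end

section
/- Let n ≥ 1 and set k = ⌈n/2⌉. The poset obtained by restricting the left weak order on S_n to AltAv_n(123) is order-isomorphic to the poset of integer partitions λ = (λ_1 ≥ λ_2 ≥ ⋯ ≥ λ_{k−1} ≥ 0) satisfying λ_i ≤ k − i for each i (Young diagrams contained in the staircase shape (k−1, k−2, …, 1)), ordered componentwise (containment of Young diagrams). In particular, this poset is a distributive lattice. -/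
/-- `σ` is alternating (up-down): zero-based, `σ(j) < σ(j+1)` for even `j` and
`σ(j) > σ(j+1)` for odd `j`. -/
def Alternating {n : ℕ} (σ : Equiv.Perm (Fin n)) : Prop :=
  ∀ (j : ℕ) (h : j + 1 < n),
    (Even j → σ ⟨j, by omega⟩ < σ ⟨j + 1, h⟩) ∧
    (Odd j → σ ⟨j + 1, h⟩ < σ ⟨j, by omega⟩)

/-- `AltAv_n(123)`: alternating permutations avoiding 123. -/
def AltAv123 (n : ℕ) : Set (Equiv.Perm (Fin n)) :=
  {σ : Equiv.Perm (Fin n) | Alternating σ ∧ ¬ containsPattern σ p123}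

/-- The inversion (position) set of `σ`. -/
def InvSet {n : ℕ} (σ : Equiv.Perm (Fin n)) : Set (Fin n × Fin n) :=
  {p | p.1 < p.2 ∧ σ p.2 < σ p.1}

namespace Stmt14Aux


open Finset

variable {n : ℕ} {σ : Equiv.Perm (Fin n)}

lemma no123 (hP : ¬ containsPattern σ p123) {a b c : Fin n} (hab : a < b) (hbc : b < c)
    (h1 : σ a < σ b) (h2 : σ b < σ c) : False := by
  apply hP
  refine ⟨![a, b, c], ?_, ?_⟩
  · intro x y hxy
    fin_cases x <;> fin_cases y <;> simp_all <;> omega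
  · intro x y
    have h3 : σ a < σ c := h1.trans h2
    fin_cases x <;> fin_cases y <;>
      simp [p123, h1, h2, h3, lt_asymm h1, lt_asymm h2, lt_asymm h3]

lemma altUp (hA : Alternating σ) {j : ℕ} (hj : j % 2 = 0) (h : j + 1 < n) :
    σ ⟨j, by omega⟩ < σ ⟨j + 1, h⟩ :=
  (hA j h).1 (Nat.even_iff.mpr hj)

lemma altDown (hA : Alternating σ) {j : ℕ} (hj : j % 2 = 1) (h : j + 1 < n) :
    σ ⟨j + 1, h⟩ < σ ⟨j, by omega⟩ :=
  (hA j h).2 (Nat.odd_iff.mpr hj)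

lemma ne_of_idx_ne {a b : ℕ} (ha : a < n) (hb : b < n) (hab : a ≠ b) :
    σ ⟨a, ha⟩ ≠ σ ⟨b, hb⟩ := by
  intro h
  exact hab (by simpa [Fin.mk.injEq] using σ.injective h)

/-- peaks are decreasing -/
lemma peaks_desc (hA : Alternating σ) (hP : ¬ containsPattern σ p123)
    {a b : ℕ} (ha : a % 2 = 1) (hb : b % 2 = 1) (hab : a < b) (hbn : b < n) :
    σ ⟨b, hbn⟩ < σ ⟨a, by omega⟩ := by
  rcases lt_trichotomy (σ ⟨a, by omega⟩) (σ ⟨b, hbn⟩) with h | h | h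
  · exfalso
    have ha1 : a - 1 + 1 < n := by omega
    have hup : σ ⟨a - 1, by omega⟩ < σ ⟨a - 1 + 1, ha1⟩ := altUp hA (by omega) ha1
    have : (⟨a - 1 + 1, ha1⟩ : Fin n) = ⟨a, by omega⟩ := by
      ext; simp; omega
    rw [this] at hup
    exact no123 hP (a := ⟨a - 1, by omega⟩) (b := ⟨a, by omega⟩) (c := ⟨b, hbn⟩)
      (by simp only [Fin.mk_lt_mk]; omega) (by simp only [Fin.mk_lt_mk]; omega) hup h
  · exact absurd h (ne_of_idx_ne _ _ (by omega))
  · exact h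

/-- even positions with a successor are decreasing -/
lemma evens_desc (hA : Alternating σ) (hP : ¬ containsPattern σ p123)
    {a b : ℕ} (ha : a % 2 = 0) (hb : b % 2 = 0) (hab : a < b) (hbn : b + 1 < n) :
    σ ⟨b, by omega⟩ < σ ⟨a, by omega⟩ := by
  rcases lt_trichotomy (σ ⟨a, by omega⟩) (σ ⟨b, by omega⟩) with h | h | h
  · exfalso
    have hup : σ ⟨b, by omega⟩ < σ ⟨b + 1, hbn⟩ := altUp hA hb hbn
    exact no123 hP (a := ⟨a, by omega⟩) (b := ⟨b, by omega⟩) (c := ⟨b + 1, hbn⟩)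
      (by simp only [Fin.mk_lt_mk]; omega) (by simp only [Fin.mk_lt_mk]; omega) h hup
  · exact absurd h (ne_of_idx_ne _ _ (by omega))
  · exact h

/-- n odd: the last entry is smaller than every peak -/
lemma last_small (hA : Alternating σ) (hP : ¬ containsPattern σ p123) (hodd : n % 2 = 1)
    {b : ℕ} (hb : b % 2 = 1) (hbn : b < n) :
    σ ⟨n - 1, by omega⟩ < σ ⟨b, hbn⟩ := by
  have hb2 : b ≤ n - 2 := by omega
  rcases eq_or_lt_of_le hb2 with heq | hlt
  · have h1 : n - 2 + 1 < n := by omega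
    have := altDown hA (j := n - 2) (by omega) h1
    have e1 : (⟨n - 2 + 1, h1⟩ : Fin n) = ⟨n - 1, by omega⟩ := by ext; simp; omega
    have e2 : (⟨n - 2, by omega⟩ : Fin n) = ⟨b, hbn⟩ := by ext; simp; omega
    rwa [e1, e2] at this
  · rcases lt_trichotomy (σ ⟨b, hbn⟩) (σ ⟨n - 1, by omega⟩) with h | h | h
    · exfalso
      have ha1 : b - 1 + 1 < n := by omega
      have hup : σ ⟨b - 1, by omega⟩ < σ ⟨b - 1 + 1, ha1⟩ := altUp hA (by omega) ha1
      have e : (⟨b - 1 + 1, ha1⟩ : Fin n) = ⟨b, hbn⟩ := by ext; simp; omega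
      rw [e] at hup
      exact no123 hP (a := ⟨b - 1, by omega⟩) (b := ⟨b, hbn⟩) (c := ⟨n - 1, by omega⟩)
        (by simp only [Fin.mk_lt_mk]; omega) (by simp only [Fin.mk_lt_mk]; omega) hup h
    · exact absurd h (ne_of_idx_ne _ _ (by omega))
    · exact h

/-- everything before an even position (with successor) is bigger -/
lemma prefix_big (hA : Alternating σ) (hP : ¬ containsPattern σ p123)
    {a b : ℕ} (hb : b % 2 = 0) (hbn : b + 1 < n) (hab : a < b) :
    σ ⟨b, by omega⟩ < σ ⟨a, by omega⟩ := by
  rcases Nat.even_or_odd a with hae | hao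
  · exact evens_desc hA hP (Nat.even_iff.mp hae) hb hab hbn
  · have ha : a % 2 = 1 := Nat.odd_iff.mp hao
    have hdown : σ ⟨b, by omega⟩ < σ ⟨b - 1, by omega⟩ := by
      have h1 : b - 1 + 1 < n := by omega
      have := altDown hA (j := b - 1) (by omega) h1
      have e : (⟨b - 1 + 1, h1⟩ : Fin n) = ⟨b, by omega⟩ := by ext; simp; omega
      rwa [e] at this
    rcases eq_or_lt_of_le (show a ≤ b - 1 by omega) with heq | hlt
    · have e : (⟨b - 1, by omega⟩ : Fin n) = ⟨a, by omega⟩ := by ext; simp; omega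
      rwa [e] at hdown
    · exact hdown.trans (peaks_desc hA hP ha (by omega) hlt (by omega))



lemma card_val_lt (c : ℕ) (hc : c ≤ n) :
    #(univ.filter fun y : Fin n => (y : ℕ) < c) = c := by
  conv_rhs => rw [← Finset.card_range c]
  refine Finset.card_bij' (fun y _ => (y : ℕ))
    (fun v hv => ⟨v, by have := Finset.mem_range.mp hv; omega⟩) ?_ ?_ ?_ ?_
  · intro a ha; simp only [mem_filter] at ha; exact Finset.mem_range.mpr ha.2
  · intro v hv; simp only [mem_filter, mem_univ, true_and]
    exact Finset.mem_range.mp hv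
  · intro a ha; simp
  · intro v hv; simp

lemma card_filter_perm (σ : Equiv.Perm (Fin n)) (P : Fin n → Prop) [DecidablePred P] :
    #(univ.filter fun q => P (σ q)) = #(univ.filter P) := by
  refine Finset.card_bij' (i := fun q _ => σ q) (j := fun y _ => σ.symm y) ?_ ?_ ?_ ?_
  · intro a ha; simp only [mem_filter, mem_univ, true_and] at ha ⊢; exact ha
  · intro y hy; simp only [mem_filter, mem_univ, true_and] at hy ⊢; simpa using hy
  · intro a _; simp
  · intro y _; simp

lemma card_app_lt (σ : Equiv.Perm (Fin n)) (c : ℕ) (hc : c ≤ n) :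
    #(univ.filter fun q : Fin n => (σ q : ℕ) < c) = c := by
  rw [card_filter_perm σ (fun y => (y : ℕ) < c)]; exact card_val_lt c hc

lemma card_app_gt (σ : Equiv.Perm (Fin n)) (c : ℕ) (hc : c < n) :
    #(univ.filter fun q : Fin n => c < (σ q : ℕ)) = n - 1 - c := by
  rw [card_filter_perm σ (fun y => c < (y : ℕ))]
  have h1 := Finset.card_filter_add_card_filter_not
    (s := (univ : Finset (Fin n))) (p := fun y => (y : ℕ) < c + 1)
  have h2 : #(univ.filter fun y : Fin n => (y : ℕ) < c + 1) = c + 1 :=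
    card_val_lt _ (by omega)
  have h3 : (univ.filter fun y : Fin n => ¬ (y : ℕ) < c + 1)
      = univ.filter fun y : Fin n => c < (y : ℕ) := by
    apply Finset.filter_congr; intro y _; constructor <;> (intro h; omega)
  rw [h2, h3] at h1
  have h4 : #(univ : Finset (Fin n)) = n := by simp
  omega

lemma card_filter_le_of_val (P : Fin n → Prop) [DecidablePred P] (s : Finset ℕ)
    (h : ∀ q : Fin n, P q → (q : ℕ) ∈ s) : #(univ.filter P) ≤ s.card := by
  refine Finset.card_le_card_of_injOn Fin.val ?_ (Fin.val_injective.injOn)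
  intro q hq; exact h q (Finset.mem_filter.mp hq).2

lemma le_card_filter (P : Fin n → Prop) [DecidablePred P] (s : Finset ℕ) (g : ℕ → ℕ)
    (h : ∀ r ∈ s, ∃ hr : g r < n, P ⟨g r, hr⟩) (hg : Set.InjOn g s) :
    s.card ≤ #(univ.filter P) := by
  have h2 : s.card ≤ #((univ.filter P).image Fin.val) := by
    refine Finset.card_le_card_of_injOn g ?_ hg
    intro r hr
    obtain ⟨hrn, hP⟩ := h r hr
    exact Finset.mem_image.mpr ⟨⟨g r, hrn⟩, Finset.mem_filter.mpr ⟨Finset.mem_univ _, hP⟩, rfl⟩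
  rwa [Finset.card_image_of_injective _ Fin.val_injective] at h2



/-- the value at a valley equals the number of inversions in its row -/
lemma valley_row (hA : Alternating σ) (hP : ¬ containsPattern σ p123) {i : ℕ}
    (h2i : 2 * i < n) (h21 : 2 * i + 1 < n) :
    #(univ.filter fun q : Fin n =>
        2 * i < (q : ℕ) ∧ (σ q : ℕ) < (σ ⟨2 * i, h2i⟩ : ℕ))
      = (σ ⟨2 * i, h2i⟩ : ℕ) := by
  have hfeq : (univ.filter fun q : Fin n =>
        2 * i < (q : ℕ) ∧ (σ q : ℕ) < (σ ⟨2 * i, h2i⟩ : ℕ))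
      = (univ.filter fun q : Fin n => (σ q : ℕ) < (σ ⟨2 * i, h2i⟩ : ℕ)) := by
    apply Finset.filter_congr
    intro q _
    constructor
    · exact fun h => h.2
    · intro h
      refine ⟨?_, h⟩
      rcases lt_trichotomy ((q : ℕ)) (2 * i) with hq | hq | hq
      · exfalso
        have hb := Fin.lt_def.mp (prefix_big hA hP (a := (q : ℕ)) (b := 2 * i) (by omega)
          (by omega) hq)
        have e : ((σ ⟨(q : ℕ), by omega⟩ : Fin n) : ℕ) = ((σ q : Fin n) : ℕ) :=
          congrArg (fun z : Fin n => ((σ z : Fin n) : ℕ)) (by ext; simp)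
        omega
      · exfalso
        have e : q = (⟨2 * i, h2i⟩ : Fin n) := by ext; simpa using hq
        rw [e] at h
        omega
      · exact hq
  rw [hfeq]
  exact card_app_lt σ _ (le_of_lt (Fin.is_lt _))

/-- lower bound for valley values -/
lemma valley_lb (hA : Alternating σ) (hP : ¬ containsPattern σ p123) {i : ℕ}
    (h2i : 2 * i < n) (h21 : 2 * i + 1 < n) :
    n / 2 - 1 - i ≤ (σ ⟨2 * i, h2i⟩ : ℕ) := by
  rw [← card_app_lt σ (σ ⟨2 * i, h2i⟩ : ℕ) (le_of_lt (Fin.is_lt _))]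
  have h3 := le_card_filter (fun q : Fin n => (σ q : ℕ) < (σ ⟨2 * i, h2i⟩ : ℕ))
    (Finset.Ico (i + 1) (n / 2)) (fun t => 2 * t) ?_ ?_
  · rw [Nat.card_Ico] at h3; omega
  · intro t ht
    have ht' := Finset.mem_Ico.mp ht
    have hlt : 2 * t + 1 < n := by omega
    refine ⟨show 2 * t < n by omega, ?_⟩
    exact Fin.lt_def.mp (evens_desc hA hP (a := 2 * i) (b := 2 * t) (by omega) (by omega)
      (by omega) hlt)
  · intro x _ y _ hxy
    have hxy' : 2 * x = 2 * y := hxy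
    omega

/-- upper bound for valley values -/
lemma valley_ub (hA : Alternating σ) (hP : ¬ containsPattern σ p123) {i : ℕ}
    (h2i : 2 * i < n) (h21 : 2 * i + 1 < n) :
    (σ ⟨2 * i, h2i⟩ : ℕ) + 2 * i + 2 ≤ n := by
  have hgt := card_app_gt σ (σ ⟨2 * i, h2i⟩ : ℕ) (Fin.is_lt _)
  have h3 := le_card_filter (fun q : Fin n => (σ ⟨2 * i, h2i⟩ : ℕ) < (σ q : ℕ))
    (Finset.range (2 * i + 1)) (fun r => if r = 2 * i then 2 * i + 1 else r) ?_ ?_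
  · rw [Finset.card_range, hgt] at h3
    have := Fin.is_lt (σ ⟨2 * i, h2i⟩)
    omega
  · intro r hr
    have hr' := Finset.mem_range.mp hr
    by_cases hcase : r = 2 * i
    · have e : (if r = 2 * i then 2 * i + 1 else r) = 2 * i + 1 := if_pos hcase
      refine ⟨show (if r = 2 * i then 2 * i + 1 else r) < n by omega, ?_⟩
      simp only [e]
      exact Fin.lt_def.mp (altUp hA (show (2 * i) % 2 = 0 by omega) h21)
    · have e : (if r = 2 * i then 2 * i + 1 else r) = r := if_neg hcase
      refine ⟨show (if r = 2 * i then 2 * i + 1 else r) < n by omega, ?_⟩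
      simp only [e]
      exact Fin.lt_def.mp (prefix_big hA hP (a := r) (b := 2 * i) (by omega) (by omega)
        (by omega))
  · intro x hx y hy hxy
    simp only [Finset.coe_range, Set.mem_Iio] at hx hy
    have hxy' : (if x = 2 * i then 2 * i + 1 else x) = (if y = 2 * i then 2 * i + 1 else y) :=
      hxy
    split_ifs at hxy' <;> omega

lemma key5a (hA : Alternating σ) (hP : ¬ containsPattern σ p123) {i j : ℕ}
    (hij : i ≤ j) (h2i : 2 * i < n) (hj : 2 * j + 1 < n)
    (h : (σ ⟨2 * j + 1, hj⟩ : ℕ) < (σ ⟨2 * i, h2i⟩ : ℕ)) :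
    n ≤ (σ ⟨2 * i, h2i⟩ : ℕ) + i + j + 1 := by
  have hgt := card_app_gt σ (σ ⟨2 * i, h2i⟩ : ℕ) (Fin.is_lt _)
  have hub := card_filter_le_of_val (fun q : Fin n => (σ ⟨2 * i, h2i⟩ : ℕ) < (σ q : ℕ))
    ((Finset.range (2 * i)) ∪ ((Finset.range (2 * j + 1)).filter
      fun q => q % 2 = 1 ∧ 2 * i < q)) ?_
  · have hcard : ((Finset.range (2 * i)) ∪ ((Finset.range (2 * j + 1)).filter
        fun q => q % 2 = 1 ∧ 2 * i < q)).card ≤ i + j := by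
      refine le_trans (Finset.card_union_le _ _) ?_
      have c1 : (Finset.range (2 * i)).card = 2 * i := Finset.card_range _
      have c2 : ((Finset.range (2 * j + 1)).filter fun q => q % 2 = 1 ∧ 2 * i < q).card
          ≤ j - i := by
        have := Finset.card_le_card_of_injOn (f := fun q => q / 2)
          (s := (Finset.range (2 * j + 1)).filter fun q => q % 2 = 1 ∧ 2 * i < q)
          (t := Finset.Ico i j) ?_ ?_
        · rw [Nat.card_Ico] at this; omega
        · intro q hq
          simp only [Finset.mem_coe, Finset.mem_filter, Finset.mem_range] at hq
          simp only [Finset.mem_coe, Finset.mem_Ico]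
          omega
        · intro x hx y hy hxy
          simp only [Finset.coe_filter, Finset.mem_range, Set.mem_setOf_eq] at hx hy
          have hxy' : x / 2 = y / 2 := hxy
          omega
      omega
    rw [hgt] at hub
    have := Fin.is_lt (σ ⟨2 * i, h2i⟩)
    omega
  · intro q hq
    simp only [Finset.mem_union, Finset.mem_range, Finset.mem_filter]
    rcases lt_trichotomy ((q : ℕ)) (2 * i) with hqi | hqi | hqi
    · exact Or.inl hqi
    · exfalso
      have e : q = (⟨2 * i, h2i⟩ : Fin n) := by ext; simpa using hqi
      rw [e] at hq; omega
    · right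
      rcases Nat.even_or_odd (q : ℕ) with he | ho
      · exfalso
        have hq2 : (q : ℕ) % 2 = 0 := Nat.even_iff.mp he
        by_cases hlast : (q : ℕ) + 1 < n
        · have hb := Fin.lt_def.mp (evens_desc hA hP (a := 2 * i) (b := (q : ℕ))
            (by omega) hq2 hqi hlast)
          have e : ((σ ⟨(q : ℕ), by omega⟩ : Fin n) : ℕ) = ((σ q : Fin n) : ℕ) :=
            congrArg (fun z : Fin n => ((σ z : Fin n) : ℕ)) (by ext; simp)
          omega
        · have hnodd : n % 2 = 1 := by have := q.isLt; omega
          have hb := Fin.lt_def.mp (last_small hA hP hnodd (b := 2 * j + 1) (by omega) hj)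
          have e : ((σ ⟨n - 1, by omega⟩ : Fin n) : ℕ) = ((σ q : Fin n) : ℕ) :=
            congrArg (fun z : Fin n => ((σ z : Fin n) : ℕ))
              (by ext; simp; have := q.isLt; omega)
          omega
      · have hq2 : (q : ℕ) % 2 = 1 := Nat.odd_iff.mp ho
        refine ⟨?_, hq2, hqi⟩
        by_contra hge
        push_neg at hge
        rcases eq_or_lt_of_le hge with heq | hlt2
        · have e : q = (⟨2 * j + 1, hj⟩ : Fin n) := by ext; simp; omega
          rw [e] at hq; omega
        · have hb := Fin.lt_def.mp (peaks_desc hA hP (a := 2 * j + 1) (b := (q : ℕ))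
            (by omega) hq2 hlt2 q.isLt)
          have e : ((σ ⟨(q : ℕ), q.isLt⟩ : Fin n) : ℕ) = ((σ q : Fin n) : ℕ) :=
            congrArg (fun z : Fin n => ((σ z : Fin n) : ℕ)) (by ext; simp)
          omega

lemma key5b (hA : Alternating σ) (hP : ¬ containsPattern σ p123) {i j : ℕ}
    (hij : i ≤ j) (h2i : 2 * i < n) (hj : 2 * j + 1 < n)
    (h : n ≤ (σ ⟨2 * i, h2i⟩ : ℕ) + i + j + 1) :
    (σ ⟨2 * j + 1, hj⟩ : ℕ) < (σ ⟨2 * i, h2i⟩ : ℕ) := by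
  by_contra hc
  push_neg at hc
  have hne : (σ ⟨2 * i, h2i⟩ : ℕ) ≠ (σ ⟨2 * j + 1, hj⟩ : ℕ) := by
    intro he
    exact ne_of_idx_ne (σ := σ) h2i hj (by omega) (Fin.val_injective he)
  have hlt : (σ ⟨2 * i, h2i⟩ : ℕ) < (σ ⟨2 * j + 1, hj⟩ : ℕ) := by omega
  have hgt := card_app_gt σ (σ ⟨2 * i, h2i⟩ : ℕ) (Fin.is_lt _)
  have h3 := le_card_filter (fun q : Fin n => (σ ⟨2 * i, h2i⟩ : ℕ) < (σ q : ℕ))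
    (Finset.range (i + j + 1)) (fun r => if r < 2 * i then r else 2 * (r - i) + 1) ?_ ?_
  · rw [Finset.card_range, hgt] at h3
    have := Fin.is_lt (σ ⟨2 * i, h2i⟩)
    omega
  · intro r hr
    have hr' := Finset.mem_range.mp hr
    by_cases hcase : r < 2 * i
    · have e : (if r < 2 * i then r else 2 * (r - i) + 1) = r := if_pos hcase
      refine ⟨show (if r < 2 * i then r else 2 * (r - i) + 1) < n by omega, ?_⟩
      simp only [e]
      exact Fin.lt_def.mp (prefix_big hA hP (a := r) (b := 2 * i) (by omega) (by omega)
        hcase)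
    · have e : (if r < 2 * i then r else 2 * (r - i) + 1) = 2 * (r - i) + 1 := if_neg hcase
      push_neg at hcase
      have ht : r - i ≤ j := by omega
      have hpos : 2 * (r - i) + 1 < n := by omega
      refine ⟨show (if r < 2 * i then r else 2 * (r - i) + 1) < n by omega, ?_⟩
      simp only [e]
      rcases eq_or_lt_of_le ht with heq | hlt2
      · have e3 : (⟨2 * (r - i) + 1, hpos⟩ : Fin n) = ⟨2 * j + 1, hj⟩ := by
          ext; simp; omega
        rw [e3]
        exact hlt
      · have hb := Fin.lt_def.mp (peaks_desc hA hP (a := 2 * (r - i) + 1) (b := 2 * j + 1)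
          (by omega) (by omega) (by omega) hj)
        exact lt_trans hlt hb
  · intro x hx y hy hxy
    simp only [Finset.coe_range, Set.mem_Iio] at hx hy
    have hxy' : (if x < 2 * i then x else 2 * (x - i) + 1)
        = (if y < 2 * i then y else 2 * (y - i) + 1) := hxy
    split_ifs at hxy' <;> omega

lemma key6a (hA : Alternating σ) (hP : ¬ containsPattern σ p123) (hodd : n % 2 = 1)
    {i : ℕ} (h2i : 2 * i < n) (hi : 2 * i + 1 < n) (hn1 : n - 1 < n)
    (h : (σ ⟨n - 1, hn1⟩ : ℕ) < (σ ⟨2 * i, h2i⟩ : ℕ)) :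
    n / 2 ≤ (σ ⟨2 * i, h2i⟩ : ℕ) + i := by
  have hlt := card_app_lt σ (σ ⟨2 * i, h2i⟩ : ℕ) (le_of_lt (Fin.is_lt _))
  have h3 := le_card_filter (fun q : Fin n => (σ q : ℕ) < (σ ⟨2 * i, h2i⟩ : ℕ))
    (Finset.Ico (i + 1) (n / 2 + 1)) (fun t => if t = n / 2 then n - 1 else 2 * t) ?_ ?_
  · rw [Nat.card_Ico, hlt] at h3
    omega
  · intro t ht
    have ht' := Finset.mem_Ico.mp ht
    by_cases hcase : t = n / 2
    · have e : (if t = n / 2 then n - 1 else 2 * t) = n - 1 := if_pos hcase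
      refine ⟨show (if t = n / 2 then n - 1 else 2 * t) < n by omega, ?_⟩
      simp only [e]
      exact h
    · have e : (if t = n / 2 then n - 1 else 2 * t) = 2 * t := if_neg hcase
      have h2t : 2 * t + 1 < n := by omega
      refine ⟨show (if t = n / 2 then n - 1 else 2 * t) < n by omega, ?_⟩
      simp only [e]
      exact Fin.lt_def.mp (evens_desc hA hP (a := 2 * i) (b := 2 * t) (by omega)
        (by omega) (by omega) h2t)
  · intro x hx y hy hxy
    simp only [Finset.coe_Ico, Set.mem_Ico] at hx hy
    have hxy' : (if x = n / 2 then n - 1 else 2 * x) = (if y = n / 2 then n - 1 else 2 * y) :=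
      hxy
    split_ifs at hxy' <;> omega

lemma key6b (hA : Alternating σ) (hP : ¬ containsPattern σ p123) (hodd : n % 2 = 1)
    {i : ℕ} (h2i : 2 * i < n) (hi : 2 * i + 1 < n) (hn1 : n - 1 < n)
    (h : n / 2 ≤ (σ ⟨2 * i, h2i⟩ : ℕ) + i) :
    (σ ⟨n - 1, hn1⟩ : ℕ) < (σ ⟨2 * i, h2i⟩ : ℕ) := by
  by_contra hc
  push_neg at hc
  have hne : (σ ⟨2 * i, h2i⟩ : ℕ) ≠ (σ ⟨n - 1, hn1⟩ : ℕ) := by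
    intro he
    exact ne_of_idx_ne (σ := σ) h2i hn1 (by omega) (Fin.val_injective he)
  have hlt2 : (σ ⟨2 * i, h2i⟩ : ℕ) < (σ ⟨n - 1, hn1⟩ : ℕ) := by omega
  have hltc := card_app_lt σ (σ ⟨2 * i, h2i⟩ : ℕ) (le_of_lt (Fin.is_lt _))
  have hub := card_filter_le_of_val (fun q : Fin n => (σ q : ℕ) < (σ ⟨2 * i, h2i⟩ : ℕ))
    ((Finset.range (n - 1)).filter fun q => q % 2 = 0 ∧ 2 * i < q) ?_
  · have c2 : ((Finset.range (n - 1)).filter fun q => q % 2 = 0 ∧ 2 * i < q).card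
        ≤ n / 2 - 1 - i := by
      have := Finset.card_le_card_of_injOn (f := fun q => q / 2)
        (s := (Finset.range (n - 1)).filter fun q => q % 2 = 0 ∧ 2 * i < q)
        (t := Finset.Ico (i + 1) (n / 2)) ?_ ?_
      · rw [Nat.card_Ico] at this; omega
      · intro q hq
        simp only [Finset.mem_coe, Finset.mem_filter, Finset.mem_range] at hq
        simp only [Finset.mem_coe, Finset.mem_Ico]
        omega
      · intro x hx y hy hxy
        simp only [Finset.coe_filter, Finset.mem_range, Set.mem_setOf_eq] at hx hy
        have hxy' : x / 2 = y / 2 := hxy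
        omega
    rw [hltc] at hub
    omega
  · intro q hq
    simp only [Finset.mem_filter, Finset.mem_range]
    rcases lt_trichotomy ((q : ℕ)) (2 * i) with hqi | hqi | hqi
    · exfalso
      have hb := Fin.lt_def.mp (prefix_big hA hP (a := (q : ℕ)) (b := 2 * i) (by omega)
        (by omega) hqi)
      have e : ((σ ⟨(q : ℕ), by omega⟩ : Fin n) : ℕ) = ((σ q : Fin n) : ℕ) :=
        congrArg (fun z : Fin n => ((σ z : Fin n) : ℕ)) (by ext; simp)
      omega
    · exfalso
      have e : q = (⟨2 * i, h2i⟩ : Fin n) := by ext; simpa using hqi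
      rw [e] at hq; omega
    · rcases Nat.even_or_odd (q : ℕ) with he | ho
      · have hq2 : (q : ℕ) % 2 = 0 := Nat.even_iff.mp he
        refine ⟨?_, hq2, hqi⟩
        have := q.isLt
        rcases eq_or_lt_of_le (show (q : ℕ) ≤ n - 1 by omega) with heq | hlt3
        · exfalso
          have e : q = (⟨n - 1, hn1⟩ : Fin n) := by ext; simp; omega
          rw [e] at hq
          omega
        · omega
      · exfalso
        have hq2 : (q : ℕ) % 2 = 1 := Nat.odd_iff.mp ho
        have hb := Fin.lt_def.mp (last_small hA hP hodd (b := (q : ℕ)) hq2 q.isLt)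
        have e : ((σ ⟨(q : ℕ), q.isLt⟩ : Fin n) : ℕ) = ((σ q : Fin n) : ℕ) :=
          congrArg (fun z : Fin n => ((σ z : Fin n) : ℕ)) (by ext; simp)
        omega

lemma evens_chain (hA : Alternating σ) (hP : ¬ containsPattern σ p123) {i j : ℕ}
    (hij : i ≤ j) (h2i : 2 * i < n) (h2j : 2 * j < n) (hj : 2 * j + 1 < n) :
    (σ ⟨2 * j, h2j⟩ : ℕ) + (j - i) ≤ (σ ⟨2 * i, h2i⟩ : ℕ) := by
  induction j with
  | zero =>
    have : i = 0 := by omega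
    simp [this]
  | succ j ih =>
    rcases eq_or_lt_of_le hij with heq | hlt
    · subst heq
      simp
    · have h2j' : 2 * j < n := by omega
      have hj' : 2 * j + 1 < n := by omega
      have ihh := ih (by omega) h2j' hj'
      have step := Fin.lt_def.mp (evens_desc hA hP (a := 2 * j) (b := 2 * (j + 1))
        (by omega) (by omega) (by omega) (by omega))
      have e : ((σ ⟨2 * (j + 1), by omega⟩ : Fin n) : ℕ)
          = ((σ ⟨2 * (j + 1), h2j⟩ : Fin n) : ℕ) := rfl
      have e2 : ((σ ⟨2 * j, by omega⟩ : Fin n) : ℕ)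
          = ((σ ⟨2 * j, h2j'⟩ : Fin n) : ℕ) := rfl
      omega


variable {τ : Equiv.Perm (Fin n)}
lemma val_decomp (σ : Equiv.Perm (Fin n)) (p : Fin n) :
    (σ p : ℕ) + #(univ.filter fun q : Fin n => (q : ℕ) < (p : ℕ) ∧ (σ p : ℕ) < (σ q : ℕ))
      = (p : ℕ) + #(univ.filter fun q : Fin n => (p : ℕ) < (q : ℕ) ∧ (σ q : ℕ) < (σ p : ℕ)) := by
  classical
  have hA : #(univ.filter fun q : Fin n => (σ q : ℕ) < (σ p : ℕ)) = (σ p : ℕ) :=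
    card_app_lt σ _ (le_of_lt (Fin.is_lt _))
  have hB : #(univ.filter fun q : Fin n => (q : ℕ) < (p : ℕ)) = (p : ℕ) :=
    card_val_lt _ (le_of_lt (Fin.is_lt _))
  have s1 : (univ.filter fun q : Fin n => (σ q : ℕ) < (σ p : ℕ))
      = (univ.filter fun q : Fin n => (q : ℕ) < (p : ℕ) ∧ (σ q : ℕ) < (σ p : ℕ))
        ∪ (univ.filter fun q : Fin n => (p : ℕ) < (q : ℕ) ∧ (σ q : ℕ) < (σ p : ℕ)) := by
    ext q
    simp only [mem_filter, mem_union, mem_univ, true_and]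
    constructor
    · intro h
      rcases lt_trichotomy ((q : ℕ)) ((p : ℕ)) with h1 | h1 | h1
      · exact Or.inl ⟨h1, h⟩
      · exfalso
        have : q = p := Fin.ext h1
        rw [this] at h; omega
      · exact Or.inr ⟨h1, h⟩
    · rintro (⟨_, h⟩ | ⟨_, h⟩) <;> exact h
  have s2 : (univ.filter fun q : Fin n => (q : ℕ) < (p : ℕ))
      = (univ.filter fun q : Fin n => (q : ℕ) < (p : ℕ) ∧ (σ q : ℕ) < (σ p : ℕ))
        ∪ (univ.filter fun q : Fin n => (q : ℕ) < (p : ℕ) ∧ (σ p : ℕ) < (σ q : ℕ)) := by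
    ext q
    simp only [mem_filter, mem_union, mem_univ, true_and]
    constructor
    · intro h
      rcases lt_trichotomy ((σ q : ℕ)) ((σ p : ℕ)) with h1 | h1 | h1
      · exact Or.inl ⟨h, h1⟩
      · exfalso
        have : q = p := σ.injective (Fin.ext h1)
        rw [this] at h; omega
      · exact Or.inr ⟨h, h1⟩
    · rintro (⟨h, _⟩ | ⟨h, _⟩) <;> exact h
  have d1 : Disjoint (univ.filter fun q : Fin n => (q : ℕ) < (p : ℕ) ∧ (σ q : ℕ) < (σ p : ℕ))
      (univ.filter fun q : Fin n => (p : ℕ) < (q : ℕ) ∧ (σ q : ℕ) < (σ p : ℕ)) := by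
    rw [Finset.disjoint_left]
    intro q h1 h2
    simp only [mem_filter] at h1 h2
    omega
  have d2 : Disjoint (univ.filter fun q : Fin n => (q : ℕ) < (p : ℕ) ∧ (σ q : ℕ) < (σ p : ℕ))
      (univ.filter fun q : Fin n => (q : ℕ) < (p : ℕ) ∧ (σ p : ℕ) < (σ q : ℕ)) := by
    rw [Finset.disjoint_left]
    intro q h1 h2
    simp only [mem_filter] at h1 h2
    omega
  rw [s1, Finset.card_union_of_disjoint d1] at hA
  rw [s2, Finset.card_union_of_disjoint d2] at hB
  omega

lemma inv_determines (h : InvSet σ = InvSet τ) : σ = τ := by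
  classical
  have key : ∀ p : Fin n, (σ p : ℕ) = (τ p : ℕ) := by
    intro p
    have e1 := val_decomp σ p
    have e2 := val_decomp τ p
    have hf1 : (univ.filter fun q : Fin n => (q : ℕ) < (p : ℕ) ∧ (σ p : ℕ) < (σ q : ℕ))
        = (univ.filter fun q : Fin n => (q : ℕ) < (p : ℕ) ∧ (τ p : ℕ) < (τ q : ℕ)) := by
      apply Finset.filter_congr
      intro q _
      have hqp := Set.ext_iff.mp h (q, p)
      simp only [InvSet, Set.mem_setOf_eq] at hqp
      constructor
      · intro ⟨h1, h2⟩
        exact ⟨h1, (hqp.mp ⟨h1, h2⟩).2⟩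
      · intro ⟨h1, h2⟩
        exact ⟨h1, (hqp.mpr ⟨h1, h2⟩).2⟩
    have hf2 : (univ.filter fun q : Fin n => (p : ℕ) < (q : ℕ) ∧ (σ q : ℕ) < (σ p : ℕ))
        = (univ.filter fun q : Fin n => (p : ℕ) < (q : ℕ) ∧ (τ q : ℕ) < (τ p : ℕ)) := by
      apply Finset.filter_congr
      intro q _
      have hqp := Set.ext_iff.mp h (p, q)
      simp only [InvSet, Set.mem_setOf_eq] at hqp
      constructor
      · intro ⟨h1, h2⟩
        exact ⟨h1, (hqp.mp ⟨h1, h2⟩).2⟩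
      · intro ⟨h1, h2⟩
        exact ⟨h1, (hqp.mpr ⟨h1, h2⟩).2⟩
    rw [hf1, hf2] at e1
    omega
  apply Equiv.ext
  intro p
  exact Fin.val_injective (key p)

lemma avoid_of_two_desc (σ : Equiv.Perm (Fin n)) (S : Finset (Fin n))
    (h1 : ∀ a b : Fin n, a ∈ S → b ∈ S → a < b → σ b < σ a)
    (h2 : ∀ a b : Fin n, a ∉ S → b ∉ S → a < b → σ b < σ a) :
    ¬ containsPattern σ p123 := by
  rintro ⟨f, hmono, hiff⟩
  have h01 : σ (f 0) < σ (f 1) := (hiff 0 1).mpr (by simp [p123])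
  have h12 : σ (f 1) < σ (f 2) := (hiff 1 2).mpr (by simp [p123])
  have hf01 : f 0 < f 1 := hmono (by decide)
  have hf12 : f 1 < f 2 := hmono (by decide)
  by_cases s0 : f 0 ∈ S <;> by_cases s1 : f 1 ∈ S <;> by_cases s2 : f 2 ∈ S
  · exact absurd (h1 _ _ s0 s1 hf01) (lt_asymm h01)
  · exact absurd (h1 _ _ s0 s1 hf01) (lt_asymm h01)
  · exact absurd (h1 _ _ s0 s2 (hf01.trans hf12)) (lt_asymm (h01.trans h12))
  · exact absurd (h2 _ _ s1 s2 hf12) (lt_asymm h12)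
  · exact absurd (h1 _ _ s1 s2 hf12) (lt_asymm h12)
  · exact absurd (h2 _ _ s0 s2 (hf01.trans hf12)) (lt_asymm (h01.trans h12))
  · exact absurd (h2 _ _ s0 s1 hf01) (lt_asymm h01)
  · exact absurd (h2 _ _ s0 s1 hf01) (lt_asymm h01)
def cntf (n : ℕ) (l : ℕ → ℕ) (j : ℕ) : ℕ :=
  #((Finset.range ((n + 1) / 2 - 1)).filter fun i => (n + 1) / 2 - j ≤ l i)

def jdxf (n p : ℕ) : ℕ := if p = 2 * ((n + 1) / 2 - 1) then n / 2 else p / 2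

def Gval (n : ℕ) (l : ℕ → ℕ) (p : ℕ) : ℕ :=
  if p % 2 = 0 ∧ p < 2 * ((n + 1) / 2 - 1) then n / 2 - 1 - p / 2 + l (p / 2)
  else n - 1 - jdxf n p - cntf n l (jdxf n p)

variable {l : ℕ → ℕ}

lemma cnt_le (j : ℕ) : cntf n l j ≤ (n + 1) / 2 - 1 := by
  refine le_trans (Finset.card_filter_le _ _) ?_
  rw [Finset.card_range]

lemma cnt_mono {j j' : ℕ} (h : j ≤ j') : cntf n l j ≤ cntf n l j' := by
  apply Finset.card_le_card
  intro x hx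
  obtain ⟨h1, h2⟩ := Finset.mem_filter.mp hx
  exact Finset.mem_filter.mpr ⟨h1, by omega⟩

lemma cnt_char (hmono : ∀ i j, i ≤ j → j < (n + 1) / 2 - 1 → l j ≤ l i)
    {i j : ℕ} (hi : i < (n + 1) / 2 - 1) :
    ((n + 1) / 2 - j ≤ l i) ↔ i < cntf n l j := by
  constructor
  · intro h
    have hsub : Finset.range (i + 1)
        ⊆ (Finset.range ((n + 1) / 2 - 1)).filter fun x => (n + 1) / 2 - j ≤ l x := by
      intro x hx
      have hx' := Finset.mem_range.mp hx
      refine Finset.mem_filter.mpr ⟨Finset.mem_range.mpr (by omega), ?_⟩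
      exact le_trans h (hmono x i (by omega) hi)
    have := Finset.card_le_card hsub
    rw [Finset.card_range] at this
    unfold cntf
    omega
  · intro h
    by_contra hli
    push_neg at hli
    have hsub : ((Finset.range ((n + 1) / 2 - 1)).filter fun x => (n + 1) / 2 - j ≤ l x)
        ⊆ Finset.range i := by
      intro x hx
      obtain ⟨hx1, hx2⟩ := Finset.mem_filter.mp hx
      have hx1' := Finset.mem_range.mp hx1
      refine Finset.mem_range.mpr ?_
      by_contra hxi
      push_neg at hxi
      have := hmono i x hxi hx1'
      omega
    have := Finset.card_le_card hsub
    rw [Finset.card_range] at this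
    unfold cntf at h
    omega

lemma VC1 (hmono : ∀ i j, i ≤ j → j < (n + 1) / 2 - 1 → l j ≤ l i)
    {i j : ℕ} (hi : i < (n + 1) / 2 - 1) (hj : j ≤ n / 2)
    (h : (n + 1) / 2 - j ≤ l i) :
    n - 1 - j - cntf n l j < n / 2 - 1 - i + l i := by
  have hc := (cnt_char hmono hi).mp h
  have hle := cnt_le (n := n) (l := l) j
  omega

lemma VC2 (hmono : ∀ i j, i ≤ j → j < (n + 1) / 2 - 1 → l j ≤ l i)
    {i j : ℕ} (hi : i < (n + 1) / 2 - 1) (hj : j ≤ n / 2)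
    (h : l i < (n + 1) / 2 - j) :
    n / 2 - 1 - i + l i < n - 1 - j - cntf n l j := by
  have hc : ¬ (i < cntf n l j) := by
    rw [← cnt_char hmono hi]
    omega
  have hle := cnt_le (n := n) (l := l) j
  omega

lemma Cdesc {j j' : ℕ} (h : j < j') (hj' : j' ≤ n / 2) (hn : 1 ≤ n) :
    n - 1 - j' - cntf n l j' < n - 1 - j - cntf n l j := by
  have h1 := cnt_mono (n := n) (l := l) (le_of_lt h)
  have h2 := cnt_le (n := n) (l := l) j
  have h3 := cnt_le (n := n) (l := l) j'
  omega

lemma Vdesc (hmono : ∀ i j, i ≤ j → j < (n + 1) / 2 - 1 → l j ≤ l i)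
    {i i' : ℕ} (h : i < i') (hi' : i' < (n + 1) / 2 - 1) :
    n / 2 - 1 - i' + l i' < n / 2 - 1 - i + l i := by
  have := hmono i i' (le_of_lt h) hi'
  omega

lemma G_V {p : ℕ} (h1 : p % 2 = 0) (h2 : p < 2 * ((n + 1) / 2 - 1)) :
    Gval n l p = n / 2 - 1 - p / 2 + l (p / 2) := by
  unfold Gval
  rw [if_pos ⟨h1, h2⟩]

lemma G_C {p : ℕ} (h : ¬ (p % 2 = 0 ∧ p < 2 * ((n + 1) / 2 - 1))) :
    Gval n l p = n - 1 - jdxf n p - cntf n l (jdxf n p) := by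
  unfold Gval
  rw [if_neg h]

lemma jdx_le {p : ℕ} (hp : p < n) (h : ¬ (p % 2 = 0 ∧ p < 2 * ((n + 1) / 2 - 1))) :
    jdxf n p ≤ n / 2 := by
  unfold jdxf
  split_ifs <;> omega

lemma ctype_classify {p : ℕ} (hp : p < n) (h : ¬ (p % 2 = 0 ∧ p < 2 * ((n + 1) / 2 - 1))) :
    p % 2 = 1 ∨ p = 2 * ((n + 1) / 2 - 1) := by
  omega

lemma jdx_inj {p p' : ℕ} (hp : p < n) (hp' : p' < n)
    (h : ¬ (p % 2 = 0 ∧ p < 2 * ((n + 1) / 2 - 1)))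
    (h' : ¬ (p' % 2 = 0 ∧ p' < 2 * ((n + 1) / 2 - 1)))
    (hne : p ≠ p') : jdxf n p ≠ jdxf n p' := by
  have c1 := ctype_classify hp h
  have c2 := ctype_classify hp' h'
  unfold jdxf
  split_ifs <;> omega

lemma Gval_lt (hbound : ∀ i, i < (n + 1) / 2 - 1 → l i ≤ (n + 1) / 2 - 1 - i)
    (hn : 1 ≤ n) {p : ℕ} (hp : p < n) : Gval n l p < n := by
  unfold Gval
  split_ifs with hc
  · have := hbound (p / 2) (by omega)
    omega
  · omega

lemma G_inj (hmono : ∀ i j, i ≤ j → j < (n + 1) / 2 - 1 → l j ≤ l i)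
    (hn : 1 ≤ n)
    {p p' : ℕ} (hp : p < n) (hp' : p' < n) (heq : Gval n l p = Gval n l p') : p = p' := by
  by_contra hne
  by_cases c1 : p % 2 = 0 ∧ p < 2 * ((n + 1) / 2 - 1) <;>
    by_cases c2 : p' % 2 = 0 ∧ p' < 2 * ((n + 1) / 2 - 1)
  · rw [G_V c1.1 c1.2, G_V c2.1 c2.2] at heq
    have hne2 : p / 2 ≠ p' / 2 := by omega
    rcases lt_or_gt_of_ne hne2 with h | h
    · have := Vdesc hmono h (by omega)
      omega
    · have := Vdesc hmono h (by omega)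
      omega
  · rw [G_V c1.1 c1.2, G_C c2] at heq
    have hj := jdx_le hp' c2
    rcases le_or_gt ((n + 1) / 2 - jdxf n p') (l (p / 2)) with h | h
    · have := VC1 hmono (show p / 2 < (n + 1) / 2 - 1 by omega) hj h
      omega
    · have := VC2 hmono (show p / 2 < (n + 1) / 2 - 1 by omega) hj h
      omega
  · rw [G_C c1, G_V c2.1 c2.2] at heq
    have hj := jdx_le hp c1
    rcases le_or_gt ((n + 1) / 2 - jdxf n p) (l (p' / 2)) with h | h
    · have := VC1 hmono (show p' / 2 < (n + 1) / 2 - 1 by omega) hj h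
      omega
    · have := VC2 hmono (show p' / 2 < (n + 1) / 2 - 1 by omega) hj h
      omega
  · rw [G_C c1, G_C c2] at heq
    have hne2 := jdx_inj hp hp' c1 c2 hne
    rcases lt_or_gt_of_ne hne2 with h | h
    · have := Cdesc (l := l) h (jdx_le hp' c2) hn
      omega
    · have := Cdesc (l := l) h (jdx_le hp c1) hn
      omega

lemma Galt_up (hmono : ∀ i j, i ≤ j → j < (n + 1) / 2 - 1 → l j ≤ l i)
    (hbound : ∀ i, i < (n + 1) / 2 - 1 → l i ≤ (n + 1) / 2 - 1 - i)
    (hn : 1 ≤ n) {j : ℕ} (hj : j % 2 = 0) (hjn : j + 1 < n) :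
    Gval n l j < Gval n l (j + 1) := by
  by_cases hc : j < 2 * ((n + 1) / 2 - 1)
  · rw [G_V hj hc, G_C (by omega)]
    have e : jdxf n (j + 1) = j / 2 := by unfold jdxf; rw [if_neg (by omega)]; omega
    rw [e]
    exact VC2 hmono (by omega) (by omega) (by have := hbound (j / 2) (by omega); omega)
  · -- j = 2*K1, n even
    have hj2 : j = 2 * ((n + 1) / 2 - 1) := by omega
    have hne : n % 2 = 0 := by omega
    rw [G_C (by omega), G_C (by omega)]
    have e1 : jdxf n j = n / 2 := by unfold jdxf; rw [if_pos hj2]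
    have e2 : jdxf n (j + 1) = (n + 1) / 2 - 1 := by
      unfold jdxf; rw [if_neg (by omega)]; omega
    rw [e1, e2]
    exact Cdesc (by omega) (by omega) (by omega)

lemma Galt_down (hmono : ∀ i j, i ≤ j → j < (n + 1) / 2 - 1 → l j ≤ l i)
    (hbound : ∀ i, i < (n + 1) / 2 - 1 → l i ≤ (n + 1) / 2 - 1 - i)
    (hn : 1 ≤ n) {j : ℕ} (hj : j % 2 = 1) (hjn : j + 1 < n) :
    Gval n l (j + 1) < Gval n l j := by
  have ej : jdxf n j = j / 2 := by unfold jdxf; rw [if_neg (by omega)]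
  by_cases hc : j + 1 < 2 * ((n + 1) / 2 - 1)
  · rw [G_V (by omega) hc, G_C (p := j) (by omega), ej]
    have h1 : (j + 1) / 2 < (n + 1) / 2 - 1 := by omega
    have h2 : (j + 1) / 2 = j / 2 + 1 := by omega
    have := VC2 hmono h1 (show j / 2 ≤ n / 2 by omega)
      (by have := hbound ((j + 1) / 2) h1; omega)
    omega
  · have hj2 : j + 1 = 2 * ((n + 1) / 2 - 1) := by omega
    have e1 : jdxf n (j + 1) = n / 2 := by unfold jdxf; rw [if_pos hj2]
    rw [G_C (p := j + 1) (by omega), e1, G_C (p := j) (by omega), ej]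
    exact Cdesc (by omega) (le_refl _) hn

lemma G_valley (hn : 1 ≤ n) {i : ℕ} (hi : i < (n + 1) / 2 - 1) :
    Gval n l (2 * i) = n / 2 - 1 - i + l i := by
  have e : 2 * i / 2 = i := by omega
  rw [G_V (by omega) (by omega), e]

-- descending on the two classes
lemma GS_desc1 (hmono : ∀ i j, i ≤ j → j < (n + 1) / 2 - 1 → l j ≤ l i)
    (hn : 1 ≤ n) {a b : ℕ} (ha : a < n) (hb : b < n)
    (hsa : a % 2 = 1 ∨ (a = 2 * ((n + 1) / 2 - 1) ∧ n % 2 = 1 ∧ l ((n + 1) / 2 - 1 - 1) = 0))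
    (hsb : b % 2 = 1 ∨ (b = 2 * ((n + 1) / 2 - 1) ∧ n % 2 = 1 ∧ l ((n + 1) / 2 - 1 - 1) = 0))
    (hab : a < b) : Gval n l b < Gval n l a := by
  have hao : a % 2 = 1 := by
    rcases hsa with h | h
    · exact h
    · exfalso; omega
  have ea : jdxf n a = a / 2 := by unfold jdxf; rw [if_neg (by omega)]
  rcases hsb with hbo | hbe
  · have eb : jdxf n b = b / 2 := by unfold jdxf; rw [if_neg (by omega)]
    rw [G_C (p := b) (by omega), eb, G_C (p := a) (by omega), ea]
    exact Cdesc (by omega) (by omega) hn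
  · have eb : jdxf n b = n / 2 := by unfold jdxf; rw [if_pos hbe.1]
    rw [G_C (p := b) (by omega), eb, G_C (p := a) (by omega), ea]
    exact Cdesc (by omega) (le_refl _) hn

lemma GS_desc2 (hmono : ∀ i j, i ≤ j → j < (n + 1) / 2 - 1 → l j ≤ l i)
    (hbound : ∀ i, i < (n + 1) / 2 - 1 → l i ≤ (n + 1) / 2 - 1 - i)
    (hn : 1 ≤ n) {a b : ℕ} (ha : a < n) (hb : b < n)
    (hsa : ¬ (a % 2 = 1 ∨ (a = 2 * ((n + 1) / 2 - 1) ∧ n % 2 = 1 ∧ l ((n + 1) / 2 - 1 - 1) = 0)))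
    (hsb : ¬ (b % 2 = 1 ∨ (b = 2 * ((n + 1) / 2 - 1) ∧ n % 2 = 1 ∧ l ((n + 1) / 2 - 1 - 1) = 0)))
    (hab : a < b) : Gval n l b < Gval n l a := by
  have hsa1 : a % 2 ≠ 1 := fun h => hsa (Or.inl h)
  have hsb1 : b % 2 ≠ 1 := fun h => hsb (Or.inl h)
  have hae : a % 2 = 0 := by omega
  have hbe : b % 2 = 0 := by omega
  have haV : a < 2 * ((n + 1) / 2 - 1) := by omega
  rw [G_V hae haV]
  by_cases hc : b < 2 * ((n + 1) / 2 - 1)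
  · rw [G_V hbe hc]
    exact Vdesc hmono (by omega) (by omega)
  · have hb2 : b = 2 * ((n + 1) / 2 - 1) := by omega
    rw [G_C (by omega)]
    have eb : jdxf n b = n / 2 := by unfold jdxf; rw [if_pos hb2]
    rw [eb]
    -- need VC1 : k - m ≤ l (a/2)
    apply VC1 hmono (by omega) (le_refl _)
    rcases Nat.even_or_odd n with hne | hno
    · have : n % 2 = 0 := Nat.even_iff.mp hne
      omega
    · have hno' : n % 2 = 1 := Nat.odd_iff.mp hno
      have hl1 : l ((n + 1) / 2 - 1 - 1) ≠ 0 := by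
        intro h0
        exact hsb (Or.inr ⟨hb2, hno', h0⟩)
      have := hmono (a / 2) ((n + 1) / 2 - 1 - 1) (by omega) (by omega)
      omega


def fvalT (n : ℕ) (σ : Equiv.Perm (Fin n)) (i : Fin ((n + 1) / 2 - 1)) : ℕ :=
  if h : 2 * (i : ℕ) < n then (σ ⟨2 * (i : ℕ), h⟩ : ℕ) - (n / 2 - 1 - (i : ℕ)) else 0

lemma fvalT_eq (σ : Equiv.Perm (Fin n)) (ii : Fin ((n + 1) / 2 - 1))
    (h2i : 2 * (ii : ℕ) < n) :
    fvalT n σ ii = (σ ⟨2 * (ii : ℕ), h2i⟩ : ℕ) - (n / 2 - 1 - (ii : ℕ)) := dif_pos h2i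

lemma fvalT_eq' (σ : Equiv.Perm (Fin n)) {i : ℕ} (hi : i < (n + 1) / 2 - 1)
    (h2i : 2 * i < n) :
    fvalT n σ ⟨i, hi⟩ = (σ ⟨2 * i, h2i⟩ : ℕ) - (n / 2 - 1 - i) := dif_pos h2i

lemma fval_mono (hA : Alternating σ) (hP : ¬ containsPattern σ p123)
    (ii jj : Fin ((n + 1) / 2 - 1)) (hij : ii ≤ jj) : fvalT n σ jj ≤ fvalT n σ ii := by
  have hiK := ii.isLt
  have hjK := jj.isLt
  have h2i : 2 * (ii : ℕ) < n := by omega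
  have h2j : 2 * (jj : ℕ) < n := by omega
  have h2j1 : 2 * (jj : ℕ) + 1 < n := by omega
  rw [fvalT_eq σ ii h2i, fvalT_eq σ jj h2j]
  have hchain := evens_chain hA hP (i := (ii : ℕ)) (j := (jj : ℕ)) hij h2i h2j h2j1
  have lb := valley_lb hA hP h2j h2j1
  omega

lemma fval_bound (hA : Alternating σ) (hP : ¬ containsPattern σ p123)
    (ii : Fin ((n + 1) / 2 - 1)) : fvalT n σ ii ≤ (n + 1) / 2 - 1 - (ii : ℕ) := by
  have hiK := ii.isLt
  have h2i : 2 * (ii : ℕ) < n := by omega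
  have h2i1 : 2 * (ii : ℕ) + 1 < n := by omega
  rw [fvalT_eq σ ii h2i]
  have ub := valley_ub hA hP h2i h2i1
  omega

lemma inv_sub_of_fle
    (hAσ : Alternating σ) (hPσ : ¬ containsPattern σ p123)
    (hAτ : Alternating τ) (hPτ : ¬ containsPattern τ p123)
    (hle : ∀ ii : Fin ((n + 1) / 2 - 1), fvalT n σ ii ≤ fvalT n τ ii) :
    InvSet σ ⊆ InvSet τ := by
  rintro ⟨a, b⟩ ⟨hab, hval⟩
  have hab' : (a : ℕ) < (b : ℕ) := hab
  have hval' : (σ b : ℕ) < (σ a : ℕ) := hval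
  have hbn := b.isLt
  have han := a.isLt
  refine ⟨hab, ?_⟩
  show τ b < τ a
  rcases Nat.even_or_odd (a : ℕ) with haE | haO
  · have ha2 : (a : ℕ) % 2 = 0 := Nat.even_iff.mp haE
    rcases Nat.even_or_odd (b : ℕ) with hbE | hbO
    · have hb2 : (b : ℕ) % 2 = 0 := Nat.even_iff.mp hbE
      by_cases hbl : (b : ℕ) + 1 < n
      · exact evens_desc hAτ hPτ ha2 hb2 hab' hbl
      · -- b = n - 1, n odd
        have hnodd : n % 2 = 1 := by omega
        obtain ⟨i, hieq⟩ : ∃ i, 2 * i = (a : ℕ) := ⟨(a : ℕ) / 2, by omega⟩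
        have h2i : 2 * i < n := by omega
        have h2i1 : 2 * i + 1 < n := by omega
        have hiK : i < (n + 1) / 2 - 1 := by omega
        have hn1 : n - 1 < n := by omega
        have ea : a = (⟨2 * i, h2i⟩ : Fin n) := Fin.ext (show (a : ℕ) = 2 * i by omega)
        have eb : b = (⟨n - 1, hn1⟩ : Fin n) := Fin.ext (show (b : ℕ) = n - 1 by omega)
        have hsa : (σ a : ℕ) = (σ ⟨2 * i, h2i⟩ : ℕ) :=
          congrArg (fun z : Fin n => ((σ z : Fin n) : ℕ)) ea
        have hsb : (σ b : ℕ) = (σ ⟨n - 1, hn1⟩ : ℕ) :=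
          congrArg (fun z : Fin n => ((σ z : Fin n) : ℕ)) eb
        have hval2 : (σ ⟨n - 1, hn1⟩ : ℕ) < (σ ⟨2 * i, h2i⟩ : ℕ) := by omega
        have hk := key6a hAσ hPσ hnodd h2i h2i1 hn1 hval2
        have hfle := hle ⟨i, hiK⟩
        rw [fvalT_eq' σ hiK h2i, fvalT_eq' τ hiK h2i] at hfle
        have hlbσ := valley_lb hAσ hPσ h2i h2i1
        have hkτ : n / 2 ≤ (τ ⟨2 * i, h2i⟩ : ℕ) + i := by omega
        have hfin := key6b hAτ hPτ hnodd h2i h2i1 hn1 hkτ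
        have hta : (τ a : ℕ) = (τ ⟨2 * i, h2i⟩ : ℕ) :=
          congrArg (fun z : Fin n => ((τ z : Fin n) : ℕ)) ea
        have htb : (τ b : ℕ) = (τ ⟨n - 1, hn1⟩ : ℕ) :=
          congrArg (fun z : Fin n => ((τ z : Fin n) : ℕ)) eb
        exact Fin.lt_def.mpr (by omega)
    · -- a even, b odd
      have hb2 : (b : ℕ) % 2 = 1 := Nat.odd_iff.mp hbO
      obtain ⟨i, hieq⟩ : ∃ i, 2 * i = (a : ℕ) := ⟨(a : ℕ) / 2, by omega⟩
      obtain ⟨j, hjeq⟩ : ∃ j, 2 * j + 1 = (b : ℕ) := ⟨(b : ℕ) / 2, by omega⟩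
      have h2i : 2 * i < n := by omega
      have hj1 : 2 * j + 1 < n := by omega
      have haV : (a : ℕ) < 2 * ((n + 1) / 2 - 1) := by
        by_contra hcon
        push_neg at hcon
        have hspec : (a : ℕ) = n - 2 ∧ (b : ℕ) = n - 1 ∧ n % 2 = 0 := by omega
        have hd1 : n - 2 < n := by omega
        have hd2 : n - 2 + 1 < n := by omega
        have h2 : (σ ⟨n - 2, hd1⟩ : ℕ) < (σ ⟨n - 2 + 1, hd2⟩ : ℕ) :=
          altUp hAσ (by omega) hd2
        have ea : a = (⟨n - 2, hd1⟩ : Fin n) := Fin.ext (show (a : ℕ) = n - 2 by omega)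
        have eb : b = (⟨n - 2 + 1, hd2⟩ : Fin n) :=
          Fin.ext (show (b : ℕ) = n - 2 + 1 by omega)
        have hsa : (σ a : ℕ) = (σ ⟨n - 2, hd1⟩ : ℕ) :=
          congrArg (fun z : Fin n => ((σ z : Fin n) : ℕ)) ea
        have hsb : (σ b : ℕ) = (σ ⟨n - 2 + 1, hd2⟩ : ℕ) :=
          congrArg (fun z : Fin n => ((σ z : Fin n) : ℕ)) eb
        omega
      have hiK : i < (n + 1) / 2 - 1 := by omega
      have h2i1 : 2 * i + 1 < n := by omega
      have hij : i ≤ j := by omega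
      have ea : a = (⟨2 * i, h2i⟩ : Fin n) := Fin.ext (show (a : ℕ) = 2 * i by omega)
      have eb : b = (⟨2 * j + 1, hj1⟩ : Fin n) :=
        Fin.ext (show (b : ℕ) = 2 * j + 1 by omega)
      have hsa : (σ a : ℕ) = (σ ⟨2 * i, h2i⟩ : ℕ) :=
        congrArg (fun z : Fin n => ((σ z : Fin n) : ℕ)) ea
      have hsb : (σ b : ℕ) = (σ ⟨2 * j + 1, hj1⟩ : ℕ) :=
        congrArg (fun z : Fin n => ((σ z : Fin n) : ℕ)) eb
      have hval2 : (σ ⟨2 * j + 1, hj1⟩ : ℕ) < (σ ⟨2 * i, h2i⟩ : ℕ) := by omega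
      have hk := key5a hAσ hPσ hij h2i hj1 hval2
      have hfle := hle ⟨i, hiK⟩
      rw [fvalT_eq' σ hiK h2i, fvalT_eq' τ hiK h2i] at hfle
      have lbσ := valley_lb hAσ hPσ h2i h2i1
      have lbτ := valley_lb hAτ hPτ h2i h2i1
      have hkτ : n ≤ (τ ⟨2 * i, h2i⟩ : ℕ) + i + j + 1 := by omega
      have hfin := key5b hAτ hPτ hij h2i hj1 hkτ
      have hta : (τ a : ℕ) = (τ ⟨2 * i, h2i⟩ : ℕ) :=
        congrArg (fun z : Fin n => ((τ z : Fin n) : ℕ)) ea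
      have htb : (τ b : ℕ) = (τ ⟨2 * j + 1, hj1⟩ : ℕ) :=
        congrArg (fun z : Fin n => ((τ z : Fin n) : ℕ)) eb
      exact Fin.lt_def.mpr (by omega)
  · -- a odd
    have ha2 : (a : ℕ) % 2 = 1 := Nat.odd_iff.mp haO
    rcases Nat.even_or_odd (b : ℕ) with hbE | hbO
    · have hb2 : (b : ℕ) % 2 = 0 := Nat.even_iff.mp hbE
      have hd1 : (b : ℕ) - 1 < n := by omega
      have hd2 : (b : ℕ) - 1 + 1 < n := by omega
      have hdown : (τ ⟨(b : ℕ) - 1 + 1, hd2⟩ : ℕ) < (τ ⟨(b : ℕ) - 1, hd1⟩ : ℕ) :=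
        altDown hAτ (by omega) hd2
      have eb : b = (⟨(b : ℕ) - 1 + 1, hd2⟩ : Fin n) :=
        Fin.ext (show (b : ℕ) = (b : ℕ) - 1 + 1 by omega)
      have htb : (τ b : ℕ) = (τ ⟨(b : ℕ) - 1 + 1, hd2⟩ : ℕ) :=
        congrArg (fun z : Fin n => ((τ z : Fin n) : ℕ)) eb
      rcases eq_or_lt_of_le (show (a : ℕ) ≤ (b : ℕ) - 1 by omega) with heq | hlt
      · have ea : a = (⟨(b : ℕ) - 1, hd1⟩ : Fin n) :=
          Fin.ext (show (a : ℕ) = (b : ℕ) - 1 by omega)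
        have hta : (τ a : ℕ) = (τ ⟨(b : ℕ) - 1, hd1⟩ : ℕ) :=
          congrArg (fun z : Fin n => ((τ z : Fin n) : ℕ)) ea
        exact Fin.lt_def.mpr (by omega)
      · have hpk : (τ ⟨(b : ℕ) - 1, hd1⟩ : ℕ) < (τ ⟨(a : ℕ), han⟩ : ℕ) :=
          peaks_desc hAτ hPτ (a := (a : ℕ)) (b := (b : ℕ) - 1) ha2 (by omega) hlt hd1
        have hta : (τ a : ℕ) = (τ ⟨(a : ℕ), han⟩ : ℕ) := rfl
        exact Fin.lt_def.mpr (by omega)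
    · have hb2 : (b : ℕ) % 2 = 1 := Nat.odd_iff.mp hbO
      have hpk : (τ ⟨(b : ℕ), hbn⟩ : ℕ) < (τ ⟨(a : ℕ), han⟩ : ℕ) :=
        peaks_desc hAτ hPτ ha2 hb2 hab' hbn
      exact Fin.lt_def.mpr hpk

lemma fle_of_inv_sub
    (hAσ : Alternating σ) (hPσ : ¬ containsPattern σ p123)
    (hAτ : Alternating τ) (hPτ : ¬ containsPattern τ p123)
    (hsub : InvSet σ ⊆ InvSet τ) (ii : Fin ((n + 1) / 2 - 1)) :
    fvalT n σ ii ≤ fvalT n τ ii := by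
  have hiK := ii.isLt
  have h2i : 2 * (ii : ℕ) < n := by omega
  have h2i1 : 2 * (ii : ℕ) + 1 < n := by omega
  rw [fvalT_eq σ ii h2i, fvalT_eq τ ii h2i]
  have r1 := valley_row hAσ hPσ h2i h2i1
  have r2 := valley_row hAτ hPτ h2i h2i1
  have hss : (univ.filter fun q : Fin n =>
        2 * (ii : ℕ) < (q : ℕ) ∧ (σ q : ℕ) < (σ ⟨2 * (ii : ℕ), h2i⟩ : ℕ))
      ⊆ (univ.filter fun q : Fin n =>
        2 * (ii : ℕ) < (q : ℕ) ∧ (τ q : ℕ) < (τ ⟨2 * (ii : ℕ), h2i⟩ : ℕ)) := by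
    intro q hq
    obtain ⟨_, hq1, hq2⟩ := Finset.mem_filter.mp hq
    have hmem : ((⟨2 * (ii : ℕ), h2i⟩ : Fin n), q) ∈ InvSet σ := ⟨hq1, hq2⟩
    obtain ⟨t1, t2⟩ := hsub hmem
    exact Finset.mem_filter.mpr ⟨Finset.mem_univ _, hq1, t2⟩
  have hcard := Finset.card_le_card hss
  rw [r1, r2] at hcard
  omega

end Stmt14Aux

theorem stmt14 (n : ℕ) (hn : 1 ≤ n) :
    -- with k = ⌈n/2⌉, the left weak order on AltAv_n(123) is isomorphic to the
    -- lattice of Young diagrams contained in the staircase (k-1, k-2, …, 1),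
    -- ordered componentwise
    ∃ f : {σ : Equiv.Perm (Fin n) // σ ∈ AltAv123 n} →
        {l : Fin ((n + 1) / 2 - 1) → ℕ //
          (∀ i j, i ≤ j → l j ≤ l i) ∧ ∀ i, l i ≤ (n + 1) / 2 - 1 - (i : ℕ)},
      Function.Bijective f ∧
      ∀ σ τ, (InvSet σ.1 ⊆ InvSet τ.1 ↔ ∀ i, (f σ).1 i ≤ (f τ).1 i) := by
  classical
  open Stmt14Aux Finset in
  refine ⟨fun σp => ⟨fun i => fvalT n σp.1 i,
      fun i j hij => fval_mono σp.2.1 σp.2.2 i j hij,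
      fun i => fval_bound σp.2.1 σp.2.2 i⟩, ⟨?_, ?_⟩, ?_⟩
  · -- injective
    intro σp τp heq
    have hfe : ∀ i, fvalT n σp.1 i = fvalT n τp.1 i :=
      fun i => congrFun (congrArg Subtype.val heq) i
    have hs1 : InvSet σp.1 ⊆ InvSet τp.1 :=
      inv_sub_of_fle σp.2.1 σp.2.2 τp.2.1 τp.2.2 (fun i => le_of_eq (hfe i))
    have hs2 : InvSet τp.1 ⊆ InvSet σp.1 :=
      inv_sub_of_fle τp.2.1 τp.2.2 σp.2.1 σp.2.2 (fun i => le_of_eq (hfe i).symm)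
    exact Subtype.ext (inv_determines (Set.Subset.antisymm hs1 hs2))
  · -- surjective
    intro lp
    obtain ⟨l, hl1, hl2⟩ := lp
    let l' : ℕ → ℕ := fun i => if h : i < (n + 1) / 2 - 1 then l ⟨i, h⟩ else 0
    have ldef : ∀ (i : ℕ) (h : i < (n + 1) / 2 - 1), l' i = l ⟨i, h⟩ :=
      fun i h => dif_pos h
    have hmono' : ∀ i j, i ≤ j → j < (n + 1) / 2 - 1 → l' j ≤ l' i := by
      intro i j hij hj
      have hi : i < (n + 1) / 2 - 1 := by omega
      rw [ldef i hi, ldef j hj]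
      exact hl1 ⟨i, hi⟩ ⟨j, hj⟩ hij
    have hbound' : ∀ i, i < (n + 1) / 2 - 1 → l' i ≤ (n + 1) / 2 - 1 - i := by
      intro i hi
      rw [ldef i hi]
      exact hl2 ⟨i, hi⟩
    have hGlt : ∀ p : Fin n, Gval n l' p.val < n := fun p => Gval_lt hbound' hn p.isLt
    have hginj : Function.Injective (fun p : Fin n => (⟨Gval n l' p.val, hGlt p⟩ : Fin n)) := by
      intro p q h
      have hval : Gval n l' p.val = Gval n l' q.val := congrArg Fin.val h
      exact Fin.ext (G_inj hmono' hn p.isLt q.isLt hval)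
    let σl : Equiv.Perm (Fin n) :=
      Equiv.ofBijective _ (Finite.injective_iff_bijective.mp hginj)
    have hσap : ∀ p : Fin n, σl p = (⟨Gval n l' p.val, hGlt p⟩ : Fin n) := fun p => rfl
    have hAlt : Alternating σl := by
      intro j hj
      constructor
      · intro hEv
        exact Galt_up hmono' hbound' hn (Nat.even_iff.mp hEv) hj
      · intro hOd
        exact Galt_down hmono' hbound' hn (Nat.odd_iff.mp hOd) hj
    have hAv : ¬ containsPattern σl p123 := by
      apply avoid_of_two_desc σl (Finset.univ.filter fun p : Fin n =>
        p.val % 2 = 1 ∨ (p.val = 2 * ((n + 1) / 2 - 1) ∧ n % 2 = 1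
          ∧ l' ((n + 1) / 2 - 1 - 1) = 0))
      · intro a b ha hb hab
        have ha' := (Finset.mem_filter.mp ha).2
        have hb' := (Finset.mem_filter.mp hb).2
        exact GS_desc1 hmono' hn a.isLt b.isLt ha' hb' hab
      · intro a b ha hb hab
        have ha' : ¬ _ := fun h => ha (Finset.mem_filter.mpr ⟨Finset.mem_univ _, h⟩)
        have hb' : ¬ _ := fun h => hb (Finset.mem_filter.mpr ⟨Finset.mem_univ _, h⟩)
        exact GS_desc2 hmono' hbound' hn a.isLt b.isLt ha' hb' hab
    refine ⟨⟨σl, hAlt, hAv⟩, ?_⟩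
    apply Subtype.ext
    funext i
    have hiK := i.isLt
    have h2i : 2 * (i : ℕ) < n := by omega
    show fvalT n σl i = l i
    rw [fvalT_eq σl i h2i]
    have hre : (σl ⟨2 * (i : ℕ), h2i⟩ : ℕ) = Gval n l' (2 * (i : ℕ)) := rfl
    rw [hre, G_valley hn (show (i : ℕ) < (n + 1) / 2 - 1 from i.isLt),
      ldef (i : ℕ) i.isLt]
    have hfi : l ⟨(i : ℕ), i.isLt⟩ = l i := rfl
    rw [hfi]
    omega
  · -- order
    intro σp τp
    constructor
    · intro hsub i
      exact fle_of_inv_sub σp.2.1 σp.2.2 τp.2.1 τp.2.2 hsub i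
    · intro hle
      exact inv_sub_of_fle σp.2.1 σp.2.2 τp.2.1 τp.2.2 hle
end

section
/- Let σ, τ ∈ S_n satisfy either Inv(σ) ⊆ Inv(τ) (i.e. σ ≤ τ in the left weak order) or Invv(σ) ⊆ Invv(τ) (i.e. σ ≤ τ in the right weak order). Then for every 1 ≤ i ≤ n, min{σ(1), σ(2), …, σ(i)} ≤ min{τ(1), τ(2), …, τ(i)}. -/
theorem stmt15 (n : ℕ) (σ τ : Equiv.Perm (Fin n))
    (h : InvSet σ ⊆ InvSet τ ∨ Invv σ ⊆ Invv τ) (i : Fin n) :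
    (Finset.Iic i).inf' Finset.nonempty_Iic (fun j => σ j) ≤
      (Finset.Iic i).inf' Finset.nonempty_Iic (fun j => τ j) := by
  by_contra hlt
  push_neg at hlt
  set m := (Finset.Iic i).inf' Finset.nonempty_Iic (fun j => σ j) with hm
  obtain ⟨q, hq, hqv⟩ := (Finset.inf'_lt_iff Finset.nonempty_Iic).mp hlt
  have hmle : ∀ j ∈ Finset.Iic i, m ≤ σ j := fun j hj => Finset.inf'_le _ hj
  have hqi : q ≤ i := Finset.mem_Iic.mp hq
  rcases h with hL | hR
  · -- left weak order case
    have key : ∀ w : Fin n, w < m → τ (σ⁻¹ w) < τ q := by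
      intro w hw
      have hp : i < σ⁻¹ w := by
        by_contra hle
        push_neg at hle
        have h1 := hmle _ (Finset.mem_Iic.mpr hle)
        rw [Equiv.Perm.inv_def, Equiv.apply_symm_apply] at h1
        exact absurd hw (not_lt.mpr h1)
      have hmem : (q, σ⁻¹ w) ∈ InvSet σ := by
        refine ⟨lt_of_le_of_lt hqi hp, ?_⟩
        rw [Equiv.Perm.inv_def, Equiv.apply_symm_apply]
        exact lt_of_lt_of_le hw (hmle q hq)
      exact (hL hmem).2
    have hcard : (Finset.Iio m).card ≤ (Finset.Iio (τ q)).card := by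
      apply Finset.card_le_card_of_injOn (fun w => τ (σ⁻¹ w))
      · intro w hw
        exact Finset.mem_Iio.mpr (key w (Finset.mem_Iio.mp hw))
      · intro a _ b _ hab
        exact σ⁻¹.injective (τ.injective hab)
    rw [Fin.card_Iio, Fin.card_Iio] at hcard
    exact absurd hqv (not_lt.mpr (Fin.le_def.mpr hcard))
  · -- right weak order case
    have key : ∀ j ∈ Finset.Iic i, τ⁻¹ (σ j) < q := by
      intro j hj
      have hji : j ≤ i := Finset.mem_Iic.mp hj
      have hp : i < σ⁻¹ (τ q) := by
        by_contra hle
        push_neg at hle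
        have h1 := hmle _ (Finset.mem_Iic.mpr hle)
        rw [Equiv.Perm.inv_def, Equiv.apply_symm_apply] at h1
        exact absurd hqv (not_lt.mpr h1)
      have hmem : ((τ q : Fin n), σ j) ∈ Invv σ := by
        refine ⟨j, σ⁻¹ (τ q), lt_of_le_of_lt hji hp, ?_, ?_⟩
        · rw [Equiv.Perm.inv_def, Equiv.apply_symm_apply]
          exact lt_of_lt_of_le hqv (hmle j hj)
        · rw [Equiv.Perm.inv_def, Equiv.apply_symm_apply]
      obtain ⟨a, b, hab, _, heq⟩ := hR hmem
      have h1 : τ b = τ q := (Prod.mk.injEq _ _ _ _ ▸ heq).1.symm ▸ rfl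
      have h2 : τ a = σ j := by
        have := (Prod.ext_iff.mp heq).2
        exact this.symm
      have hbq : b = q := τ.injective (by
        have := (Prod.ext_iff.mp heq).1
        exact this.symm)
      have haj : a = τ⁻¹ (σ j) := by
        rw [← h2, Equiv.Perm.inv_def, Equiv.symm_apply_apply]
      rw [← haj, ← hbq]
      exact hab
    have hcard : (Finset.Iic i).card ≤ (Finset.Iio q).card := by
      apply Finset.card_le_card_of_injOn (fun j => τ⁻¹ (σ j))
      · intro j hj
        exact Finset.mem_Iio.mpr (key j hj)
      · intro a _ b _ hab
        exact σ.injective (τ⁻¹.injective hab)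
    rw [Fin.card_Iic, Fin.card_Iio] at hcard
    have : (q : ℕ) ≤ (i : ℕ) := Fin.le_def.mp hqi
    omega
end
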